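/- arXiv:1311.4415 — 3 statements merged into one kernel-verified Lean document; each statement's English description precedes it below -/
import Mathlib

section
/- Let F satisfy hypothesis (F) with Lipschitz constant K and let H satisfy hypothesis (H). Let 𝒦 ⊂ ℝⁿ be compact, δ > 0, M = sup{‖v‖ : v ∈ F(x), x ∈ 𝒦 + δ𝔹ⁿ}, and δ₁ = δ/(M+1). Then for every x₀ ∈ 𝒦 and every v ∈ F(x₀) there exists a C¹ trajectory y of the differential inclusion ẏ(t) ∈ F(y(t)) with y(0) = x₀ such that ‖ẏ(t) − v‖ ≤ KMt for all t ∈ [0, δ₁]. -/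
open Set MeasureTheory Filter Topology Metric
open scoped ENNReal Pointwise

noncomputable section

/-- Euclidean space `ℝⁿ`. -/
abbrev En (n : ℕ) := EuclideanSpace ℝ (Fin n)

variable {n : ℕ}

/-- Hypothesis (F): `F` has nonempty, convex, compact values and is Lipschitz
continuous with constant `K`, i.e. `F(x₂) ⊆ F(x₁) + K‖x₁ − x₂‖ 𝔹ⁿ`. -/
def HypF (F : En n → Set (En n)) (K : ℝ) : Prop :=
  0 < K ∧
  (∀ x : En n, (F x).Nonempty ∧ Convex ℝ (F x) ∧ IsCompact (F x)) ∧
  (∀ x₁ x₂ : En n, ∀ v ∈ F x₂, ∃ v' ∈ F x₁, ‖v - v'‖ ≤ K * ‖x₁ - x₂‖)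

/-- The Hamiltonian `H(x,p) = sup_{v ∈ F(x)} ⟨p,v⟩`. -/
def Ham (F : En n → Set (En n)) (x p : En n) : ℝ :=
  sSup ((fun v => (inner ℝ p v : ℝ)) '' F x)

/-- Hypothesis (H): (H1) `x ↦ H(x,p)` is semiconvex with constant `c₀‖p‖`;
(H2) the gradient `∇ₚH(·,p)` exists for `p ≠ 0` (given by `gradp`) and is
Lipschitz in `x` with constant `K₁`, uniformly in `p ≠ 0`. -/
def HypH (F : En n → Set (En n)) (gradp : En n → En n → En n) (c₀ K₁ : ℝ) : Prop :=
  0 ≤ c₀ ∧ 0 ≤ K₁ ∧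
  (∀ p x₁ x₂ : En n,
    (Ham F x₁ p + Ham F x₂ p) / 2 - Ham F ((1 / 2 : ℝ) • (x₁ + x₂)) p ≥
      -(c₀ * ‖p‖ / 4) * ‖x₁ - x₂‖ ^ 2) ∧
  (∀ x p : En n, p ≠ 0 → HasGradientAt (fun q => Ham F x q) (gradp x p) p) ∧
  (∀ p : En n, p ≠ 0 → ∀ x y : En n, ‖gradp x p - gradp y p‖ ≤ K₁ * ‖x - y‖)

/-- `y` is absolutely continuous on `[a,b]` with a.e. derivative `v s` satisfying `P s (v s)`. -/
def IsACWith (y : ℝ → En n) (a b : ℝ) (P : ℝ → En n → Prop) : Prop :=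
  ∃ v : ℝ → En n,
    (∀ t ∈ Icc a b, IntervalIntegrable v MeasureTheory.volume a t) ∧
    (∀ᵐ s ∂MeasureTheory.volume, s ∈ Icc a b → P s (v s)) ∧
    (∀ t ∈ Icc a b, y t = y a + ∫ s in (a)..t, v s)

/-- `y` is a trajectory of the differential inclusion `ẏ ∈ F(y)` on `[a,b]`. -/
def IsTraj (F : En n → Set (En n)) (y : ℝ → En n) (a b : ℝ) : Prop :=
  IsACWith y a b (fun s v => v ∈ F (y s))

/-- The minimum time function (with value `∞` if the target is not reachable). -/
def minTime (F : En n → Set (En n)) (S : Set (En n)) (x : En n) : ℝ≥0∞ :=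
  sInf (ENNReal.ofReal ''
    {r : ℝ | 0 ≤ r ∧ ∃ y : ℝ → En n, IsTraj F y 0 r ∧ y 0 = x ∧ y r ∈ S})

/-- The proximal normal cone to `S` at `z`. -/
def proxNormal (S : Set (En n)) (z : En n) : Set (En n) :=
  {v | ∃ σ : ℝ, 0 ≤ σ ∧ ∀ y ∈ S, (inner ℝ v (y - z) : ℝ) ≤ σ * ‖y - z‖ ^ 2}

/-- Proximal supergradients of the (extended-real-valued) function `T` at `z`:
`ζ ∈ ∂ᴾT(z)` iff `(−ζ,1)` is a proximal normal to the hypograph of `T` at `(z, T z)`. -/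
def proxSuperGrad (T : En n → ℝ≥0∞) (z : En n) : Set (En n) :=
  {ζ | ∃ σ : ℝ, 0 ≤ σ ∧ ∀ y : En n, T y ≠ ⊤ → ∀ β : ℝ, ENNReal.ofReal β ≤ T y →
    (inner ℝ (-ζ) (y - z) : ℝ) + (β - (T z).toReal)
      ≤ σ * (‖y - z‖ ^ 2 + |β - (T z).toReal| ^ 2)}

/-- Horizontal proximal supergradients of `T` at `z`: `ζ ∈ ∂∞T(z)` iff `(−ζ,0)` is a
proximal normal to the hypograph of `T` at `(z, T z)`. -/
def horizSuperGrad (T : En n → ℝ≥0∞) (z : En n) : Set (En n) :=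
  {ζ | ∃ σ : ℝ, 0 ≤ σ ∧ ∀ y : En n, T y ≠ ⊤ → ∀ β : ℝ, ENNReal.ofReal β ≤ T y →
    (inner ℝ (-ζ) (y - z) : ℝ) ≤ σ * (‖y - z‖ ^ 2 + |β - (T z).toReal| ^ 2)}

/-- The Clarke generalized gradient of `f` at `x`. -/
def clarkeGradAt (f : En n → ℝ) (x : En n) : Set (En n) :=
  convexHull ℝ {v | ∃ y : ℕ → En n, ∃ g : ℕ → En n,
    Filter.Tendsto y Filter.atTop (nhds x) ∧
    (∀ i, HasGradientAt f (g i) (y i)) ∧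
    Filter.Tendsto g Filter.atTop (nhds v)}

/-- `xtraj` is an optimal trajectory from `x` reaching the target `S` in time `Tx = T(x)`. -/
def OptimalTraj (F : En n → Set (En n)) (S : Set (En n)) (x : En n)
    (xtraj : ℝ → En n) (Tx : ℝ) : Prop :=
  0 ≤ Tx ∧ IsTraj F xtraj 0 Tx ∧ xtraj 0 = x ∧ xtraj Tx ∈ S ∧
    minTime F S x = ENNReal.ofReal Tx

end


set_option maxHeartbeats 1000000

section Helpers

open Set MeasureTheory Filter Topology Metric

variable {n : ℕ}

private lemma proj_exists (C : Set (En n)) (ne : C.Nonempty) (cv : Convex ℝ C)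
    (cp : IsCompact C) (v : En n) : ∃ p ∈ C, (∀ w ∈ C, ‖v - p‖ ≤ ‖v - w‖) ∧
      (∀ w ∈ C, (inner ℝ (v - p) (w - p) : ℝ) ≤ 0) := by
  obtain ⟨p, hpC, hpeq⟩ := exists_norm_eq_iInf_of_complete_convex ne cp.isComplete cv v
  refine ⟨p, hpC, ?_, (norm_eq_iInf_iff_real_inner_le_zero cv hpC).1 hpeq⟩
  intro w hw
  rw [hpeq]
  exact ciInf_le ⟨0, forall_mem_range.2 fun w => norm_nonneg _⟩ (⟨w, hw⟩ : C)

private lemma sq_est (v a b b' a' : En n) (d : ℝ)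
    (h1 : (inner ℝ (v - a) (b' - a) : ℝ) ≤ 0) (h2 : (inner ℝ (v - b) (a' - b) : ℝ) ≤ 0)
    (hb : ‖b - b'‖ ≤ d) (ha : ‖a - a'‖ ≤ d) :
    ‖a - b‖ ^ 2 ≤ (‖v - a‖ + ‖v - b‖) * d := by
  have e1 : (inner ℝ (v - a) (b - a) : ℝ) ≤ ‖v - a‖ * d := by
    have h : (inner ℝ (v - a) (b - a) : ℝ) = inner ℝ (v - a) (b' - a) + (inner ℝ (v - a) (b - b') : ℝ) := by
      rw [← inner_add_right]; congr 1; abel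
    rw [h]
    calc (inner ℝ (v - a) (b' - a) : ℝ) + inner ℝ (v - a) (b - b')
        ≤ 0 + ‖v - a‖ * ‖b - b'‖ := add_le_add h1 (real_inner_le_norm _ _)
      _ ≤ ‖v - a‖ * d := by rw [zero_add]; exact mul_le_mul_of_nonneg_left hb (norm_nonneg _)
  have e2 : (inner ℝ (v - b) (a - b) : ℝ) ≤ ‖v - b‖ * d := by
    have h : (inner ℝ (v - b) (a - b) : ℝ) = inner ℝ (v - b) (a' - b) + (inner ℝ (v - b) (a - a') : ℝ) := by
      rw [← inner_add_right]; congr 1; abel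
    rw [h]
    calc (inner ℝ (v - b) (a' - b) : ℝ) + inner ℝ (v - b) (a - a')
        ≤ 0 + ‖v - b‖ * ‖a - a'‖ := add_le_add h2 (real_inner_le_norm _ _)
      _ ≤ ‖v - b‖ * d := by rw [zero_add]; exact mul_le_mul_of_nonneg_left ha (norm_nonneg _)
  have key : ‖a - b‖ ^ 2 = (inner ℝ (v - b) (a - b) : ℝ) + inner ℝ (v - a) (b - a) := by
    rw [← real_inner_self_eq_norm_sq]
    simp only [inner_sub_left, inner_sub_right]
    ring
  rw [key]
  calc (inner ℝ (v - b) (a - b) : ℝ) + inner ℝ (v - a) (b - a)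
      ≤ ‖v - b‖ * d + ‖v - a‖ * d := add_le_add e2 e1
    _ = (‖v - a‖ + ‖v - b‖) * d := by ring

private lemma intInt_of_bounded {f : ℝ → En n} (hf : Measurable f) {C : ℝ}
    (hC : ∀ x, ‖f x‖ ≤ C) (a b : ℝ) : IntervalIntegrable f volume a b := by
  constructor <;>
  exact (integrableOn_const measure_Ioc_lt_top.ne).mono'
    hf.aestronglyMeasurable.restrict (ae_of_all _ hC)

private lemma euler_key (f : En n → En n) (x₀ : En n) (M δ₁ C₁ δ : ℝ)
    (hM : 0 ≤ M) (hδ₁ : 0 < δ₁) (hMδ : M * δ₁ ≤ δ) (hC₁ : 0 ≤ C₁)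
    (hfM : ∀ y ∈ closedBall x₀ (M * δ₁), ‖f y‖ ≤ M)
    (hmod : ∀ y₁ ∈ closedBall x₀ δ, ∀ y₂ ∈ closedBall x₀ δ,
      ‖f y₁ - f y₂‖ ≤ C₁ * Real.sqrt ‖y₁ - y₂‖)
    (N : ℕ) (hN : 0 < N) :
    ∃ Y : ℝ → En n, Y 0 = x₀ ∧ (∀ s t : ℝ, ‖Y t - Y s‖ ≤ M * |t - s|) ∧
      (∀ s ∈ Icc (0:ℝ) δ₁, ∀ t ∈ Icc (0:ℝ) δ₁, s ≤ t →
        ‖Y t - Y s - (t - s) • f (Y s)‖ ≤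
          (t - s) * (C₁ * Real.sqrt (M * (δ₁ / N) + M * (t - s)))) := by
  set h : ℝ := δ₁ / N with hdef
  have hNR : (0:ℝ) < N := Nat.cast_pos.2 hN
  have hh : 0 < h := div_pos hδ₁ hNR
  have hNh : (N:ℝ) * h = δ₁ := by rw [hdef]; field_simp
  set z : ℕ → En n := fun i => (fun p => p + h • f p)^[i] x₀ with hz
  have hzsucc : ∀ i, z (i+1) = z i + h • f (z i) := fun i =>
    Function.iterate_succ_apply' _ _ _
  have hz0 : z 0 = x₀ := rfl
  have zb : ∀ i, i ≤ N → ‖z i - x₀‖ ≤ i * h * M := by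
    intro i
    induction i with
    | zero => simp [hz0]
    | succ i ih =>
      intro hiN
      have hi : i ≤ N := le_trans (Nat.le_succ i) hiN
      have h1 := ih hi
      have hzmem : z i ∈ closedBall x₀ (M * δ₁) := by
        rw [mem_closedBall, dist_eq_norm]
        refine le_trans h1 ?_
        calc (i:ℝ) * h * M ≤ (N:ℝ) * h * M :=
              mul_le_mul_of_nonneg_right
                (mul_le_mul_of_nonneg_right (Nat.cast_le.2 hi) hh.le) hM
          _ = M * δ₁ := by rw [hNh]; ring
      calc ‖z (i+1) - x₀‖ = ‖(z i - x₀) + h • f (z i)‖ := by rw [hzsucc]; congr 1; abel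
        _ ≤ ‖z i - x₀‖ + ‖h • f (z i)‖ := norm_add_le _ _
        _ ≤ (i:ℝ) * h * M + h * M := by
            refine add_le_add h1 ?_
            rw [norm_smul, Real.norm_eq_abs, abs_of_pos hh]
            exact mul_le_mul_of_nonneg_left (hfM _ hzmem) hh.le
        _ = ((i:ℕ)+1:ℕ) * h * M := by push_cast; ring
  have zmem : ∀ i, i ≤ N → z i ∈ closedBall x₀ (M * δ₁) := by
    intro i hi
    rw [mem_closedBall, dist_eq_norm]
    refine le_trans (zb i hi) ?_
    calc (i:ℝ) * h * M ≤ (N:ℝ) * h * M :=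
          mul_le_mul_of_nonneg_right
            (mul_le_mul_of_nonneg_right (Nat.cast_le.2 hi) hh.le) hM
      _ = M * δ₁ := by rw [hNh]; ring
  set u : ℝ → En n := fun r => f (z (min ⌊r / h⌋₊ N)) with hu
  have umeas : Measurable u :=
    (measurable_from_top (f := fun i : ℕ => f (z (min i N)))).comp
      ((measurable_id.div_const h).nat_floor)
  have ubound : ∀ r, ‖u r‖ ≤ M := fun r => hfM _ (zmem _ (min_le_right _ _))
  have uint : ∀ a b : ℝ, IntervalIntegrable u volume a b := intInt_of_bounded umeas ubound
  set Y : ℝ → En n := fun t => x₀ + ∫ s in (0:ℝ)..t, u s with hY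
  have Ydiff : ∀ s t : ℝ, Y t - Y s = ∫ r in s..t, u r := by
    intro s t
    show x₀ + _ - (x₀ + _) = _
    rw [add_sub_add_left_eq_sub, intervalIntegral.integral_interval_sub_left (uint 0 t) (uint 0 s)]
  have Ylip : ∀ s t : ℝ, ‖Y t - Y s‖ ≤ M * |t - s| := by
    intro s t
    rw [Ydiff]
    exact intervalIntegral.norm_integral_le_of_norm_le_const (fun x _ => ubound x)
  have Y0 : Y 0 = x₀ := by simp [hY]
  have floor_eq : ∀ i : ℕ, i < N → ∀ r, (i:ℝ) * h ≤ r → r < ((i:ℝ)+1) * h → u r = f (z i) := by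
    intro i hiN r h1 h2
    have hr0 : 0 ≤ r / h := div_nonneg (le_trans (by positivity) h1) hh.le
    have hfl : ⌊r / h⌋₊ = i := by
      rw [Nat.floor_eq_iff hr0]
      constructor
      · rw [le_div_iff₀ hh]; linarith
      · rw [div_lt_iff₀ hh]; push_cast; linarith
    rw [hu]
    simp only [hfl, min_eq_left hiN.le]
  have Ygrid : ∀ i, i ≤ N → Y ((i:ℝ) * h) = z i := by
    intro i
    induction i with
    | zero => intro _; simpa [hz0] using Y0
    | succ i ih =>
      intro hiN
      have hi : i ≤ N := le_trans (Nat.le_succ i) hiN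
      have hiN' : i < N := hiN
      have hlt : (i:ℝ) * h < ((i:ℕ)+1:ℕ) * h := by
        push_cast; nlinarith [hh]
      have hae : ∀ᵐ r ∂(volume : Measure ℝ),
          r ∈ Set.uIoc ((i:ℝ) * h) (((i:ℕ)+1:ℕ) * h) → u r = f (z i) := by
        have hsing : (volume : Measure ℝ) {(((i:ℕ)+1:ℕ):ℝ) * h} = 0 := measure_singleton _
        filter_upwards [compl_mem_ae_iff.2 hsing] with r hr hrI
        rw [uIoc_of_le hlt.le] at hrI
        refine floor_eq i hiN' r hrI.1.le ?_
        have : r ≠ (((i:ℕ)+1:ℕ):ℝ) * h := hr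
        push_cast at this hrI ⊢
        exact lt_of_le_of_ne hrI.2 this
      have hint : ∫ r in ((i:ℝ) * h)..(((i:ℕ)+1:ℕ) * h), u r = h • f (z i) := by
        rw [intervalIntegral.integral_congr_ae hae, intervalIntegral.integral_const]
        congr 1
        push_cast; ring
      have := Ydiff ((i:ℝ) * h) ((((i:ℕ)+1:ℕ)) * h)
      rw [hint, ih hi] at this
      have : Y ((((i:ℕ)+1:ℕ)) * h) = z i + h • f (z i) := by
        have' := this; linear_combination (norm := module) this
      rw [this, ← hzsucc]
  have Ynear : ∀ r ∈ Icc (0:ℝ) δ₁, ‖Y r - z (min ⌊r / h⌋₊ N)‖ ≤ M * h := by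
    intro r hr
    have hr0 : 0 ≤ r := hr.1
    have hiN : ⌊r / h⌋₊ ≤ N := by
      have h1 : r / h ≤ δ₁ / h := div_le_div_of_nonneg_right hr.2 hh.le
      have h2 : δ₁ / h = (N:ℝ) := by rw [hdef]; field_simp
      calc ⌊r / h⌋₊ ≤ ⌊δ₁ / h⌋₊ := Nat.floor_le_floor h1
        _ = N := by rw [h2, Nat.floor_natCast]
    rw [min_eq_left hiN]
    set i := ⌊r / h⌋₊ with hi
    have hih : (i:ℝ) * h ≤ r := by
      rw [← le_div_iff₀ hh]
      exact Nat.floor_le (div_nonneg hr0 hh.le)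
    have hih2 : r < ((i:ℝ) + 1) * h := by
      rw [← div_lt_iff₀ hh]
      exact_mod_cast Nat.lt_floor_add_one (r / h)
    calc ‖Y r - z i‖ = ‖Y r - Y ((i:ℝ)*h)‖ := by rw [Ygrid i hiN]
      _ ≤ M * |r - (i:ℝ)*h| := Ylip _ _
      _ ≤ M * h := by
          rw [abs_of_nonneg (by linarith)]
          exact mul_le_mul_of_nonneg_left (by linarith) hM
  refine ⟨Y, Y0, Ylip, ?_⟩
  intro s hs t ht hst
  have hYs : Y s ∈ closedBall x₀ δ := by
    rw [mem_closedBall, dist_eq_norm]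
    calc ‖Y s - x₀‖ = ‖Y s - Y 0‖ := by rw [Y0]
      _ ≤ M * |s - 0| := Ylip _ _
      _ ≤ M * δ₁ := by rw [sub_zero, abs_of_nonneg hs.1]; exact mul_le_mul_of_nonneg_left hs.2 hM
      _ ≤ δ := hMδ
  have key : ∀ r ∈ Set.uIoc s t, ‖u r - f (Y s)‖ ≤ C₁ * Real.sqrt (M * h + M * (t - s)) := by
    intro r hrI
    rw [uIoc_of_le hst] at hrI
    have hrIcc : r ∈ Icc (0:ℝ) δ₁ := ⟨le_trans hs.1 hrI.1.le, le_trans hrI.2 ht.2⟩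
    set i := min ⌊r / h⌋₊ N with hi
    have hzi : z i ∈ closedBall x₀ δ :=
      closedBall_subset_closedBall hMδ (zmem i (min_le_right _ _))
    have hdist : ‖z i - Y s‖ ≤ M * h + M * (t - s) := by
      calc ‖z i - Y s‖ ≤ ‖z i - Y r‖ + ‖Y r - Y s‖ := norm_sub_le_norm_sub_add_norm_sub _ _ _
        _ ≤ M * h + M * (t - s) := by
            refine add_le_add ?_ ?_
            · rw [norm_sub_rev]; exact Ynear r hrIcc
            · refine le_trans (Ylip s r) ?_
              rw [abs_of_nonneg (by linarith [hrI.1.le])]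
              exact mul_le_mul_of_nonneg_left (by linarith [hrI.2]) hM
    have : ‖u r - f (Y s)‖ ≤ C₁ * Real.sqrt ‖z i - Y s‖ := hmod _ hzi _ hYs
    refine le_trans this (mul_le_mul_of_nonneg_left (Real.sqrt_le_sqrt hdist) hC₁)
  have heq : Y t - Y s - (t - s) • f (Y s) = ∫ r in s..t, (u r - f (Y s)) := by
    rw [intervalIntegral.integral_sub (uint s t) intervalIntegrable_const,
      intervalIntegral.integral_const, Ydiff]
  rw [heq]
  have := intervalIntegral.norm_integral_le_of_norm_le_const key
  rw [abs_of_nonneg (by linarith)] at this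
  calc ‖∫ r in s..t, (u r - f (Y s))‖ ≤ C₁ * Real.sqrt (M * h + M * (t - s)) * (t - s) := this
    _ = (t - s) * (C₁ * Real.sqrt (M * (δ₁ / N) + M * (t - s))) := by rw [← hdef]; ring

end Helpers

/-- Under (F) (with constant `K`) and (H), for a compact `𝒦`, `δ > 0`,
`M = sup{‖v‖ : v ∈ F(x), x ∈ 𝒦 + δ𝔹ⁿ}` and `δ₁ = δ/(M+1)`: for every `x₀ ∈ 𝒦` and
`v ∈ F(x₀)` there is a `C¹` trajectory `y` of `ẏ ∈ F(y)` with `y(0) = x₀` and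
`‖ẏ(t) − v‖ ≤ KMt` on `[0,δ₁]`. -/
theorem smooth_trajectory_approx {n : ℕ} (F : En n → Set (En n)) (K c₀ K₁ : ℝ)
    (gradp : En n → En n → En n) (hF : HypF F K) (hH : HypH F gradp c₀ K₁)
    (𝒦 : Set (En n)) (h𝒦 : IsCompact 𝒦) (δ M δ₁ : ℝ) (hδ : 0 < δ)
    (hM : M = sSup {r : ℝ | ∃ x ∈ 𝒦 + Metric.ball (0 : En n) δ, ∃ w ∈ F x, r = ‖w‖})
    (hδ₁ : δ₁ = δ / (M + 1)) :
    ∀ x₀ ∈ 𝒦, ∀ v ∈ F x₀, ∃ y y' : ℝ → En n,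
      y 0 = x₀ ∧
      (∀ t ∈ Icc (0 : ℝ) δ₁, HasDerivWithinAt y (y' t) (Icc (0 : ℝ) δ₁) t) ∧
      ContinuousOn y' (Icc (0 : ℝ) δ₁) ∧
      (∀ t ∈ Icc (0 : ℝ) δ₁, y' t ∈ F (y t)) ∧
      (∀ t ∈ Icc (0 : ℝ) δ₁, ‖y' t - v‖ ≤ K * M * t) := by
  intro x₀ hx₀ v hv
  obtain ⟨hK, hFval, hFlip⟩ := hF
  clear hH
  set S : Set (En n) := 𝒦 + Metric.ball (0 : En n) δ with hS
  have hx₀S : x₀ ∈ S := ⟨x₀, hx₀, 0, mem_ball_self hδ, add_zero x₀⟩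
  have hMub : ∀ x ∈ S, ∀ w ∈ F x, ‖w‖ ≤ M := by
    obtain ⟨C0, hC0⟩ := isBounded_iff_forall_norm_le.1 (hFval 0).2.2.isBounded
    obtain ⟨C1, hC1⟩ := isBounded_iff_forall_norm_le.1 h𝒦.isBounded
    intro x hx w hw
    rw [hM]
    refine le_csSup ⟨C0 + K * (C1 + δ), ?_⟩ ⟨x, hx, w, hw, rfl⟩
    rintro r ⟨x', hx', w', hw', rfl⟩
    obtain ⟨w'', hw'', hww⟩ := hFlip 0 x' w' hw'
    have hx'n : ‖x'‖ ≤ C1 + δ := by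
      obtain ⟨a, ha, b, hb, rfl⟩ := hx'
      calc ‖a + b‖ ≤ ‖a‖ + ‖b‖ := norm_add_le _ _
        _ ≤ C1 + δ := by
            refine add_le_add (hC1 a ha) ?_
            have := mem_ball.1 hb
            rw [dist_zero_right] at this
            exact this.le
    calc ‖w'‖ = ‖w'' + (w' - w'')‖ := by congr 1; abel
      _ ≤ ‖w''‖ + ‖w' - w''‖ := norm_add_le _ _
      _ ≤ C0 + K * ‖(0 : En n) - x'‖ := add_le_add (hC0 _ hw'') hww
      _ ≤ C0 + K * (C1 + δ) := by
          refine add_le_add le_rfl (mul_le_mul_of_nonneg_left ?_ hK.le)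
          rw [zero_sub, norm_neg]
          exact hx'n
  have hM0 : 0 ≤ M := le_trans (norm_nonneg v) (hMub x₀ hx₀S v hv)
  have hM1 : (0:ℝ) < M + 1 := by linarith
  have hδ₁pos : 0 < δ₁ := by rw [hδ₁]; positivity
  have hMδ : M * δ₁ ≤ δ := by
    rw [hδ₁, mul_div_assoc', div_le_iff₀ hM1]; nlinarith
  have hMδlt : M * δ₁ < δ := by
    rw [hδ₁, mul_div_assoc', div_lt_iff₀ hM1]; nlinarith
  have hsubS : closedBall x₀ (M * δ₁) ⊆ S := by
    intro w hw
    refine ⟨x₀, hx₀, w - x₀, ?_, by module⟩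
    rw [mem_ball, dist_eq_norm, sub_zero]
    calc ‖w - x₀‖ = dist w x₀ := (dist_eq_norm _ _).symm
      _ ≤ M * δ₁ := mem_closedBall.1 hw
      _ < δ := hMδlt
  have hproj : ∀ y : En n, ∃ p, p ∈ F y ∧ (∀ w ∈ F y, ‖v - p‖ ≤ ‖v - w‖) ∧
      (∀ w ∈ F y, (inner ℝ (v - p) (w - p) : ℝ) ≤ 0) := by
    intro y
    obtain ⟨ne, cv, cp⟩ := hFval y
    obtain ⟨p, hp1, hp2, hp3⟩ := proj_exists _ ne cv cp v
    exact ⟨p, hp1, hp2, hp3⟩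
  choose f hfmem hfmin hfang using hproj
  have hfM : ∀ y ∈ closedBall x₀ (M * δ₁), ‖f y‖ ≤ M := fun y hy =>
    hMub y (hsubS hy) _ (hfmem y)
  have hfdist : ∀ y : En n, ‖f y - v‖ ≤ K * ‖y - x₀‖ := by
    intro y
    obtain ⟨v', hv', hvv'⟩ := hFlip y x₀ v hv
    calc ‖f y - v‖ = ‖v - f y‖ := norm_sub_rev _ _
      _ ≤ ‖v - v'‖ := hfmin y v' hv'
      _ ≤ K * ‖y - x₀‖ := hvv'
  set C₁ : ℝ := Real.sqrt (2 * K ^ 2 * δ) with hC₁def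
  have hC₁ : 0 ≤ C₁ := Real.sqrt_nonneg _
  have hmod : ∀ y₁ ∈ closedBall x₀ δ, ∀ y₂ ∈ closedBall x₀ δ,
      ‖f y₁ - f y₂‖ ≤ C₁ * Real.sqrt ‖y₁ - y₂‖ := by
    intro y₁ hy₁ y₂ hy₂
    obtain ⟨b', hb', hbb⟩ := hFlip y₁ y₂ (f y₂) (hfmem y₂)
    obtain ⟨a', ha', haa⟩ := hFlip y₂ y₁ (f y₁) (hfmem y₁)
    have haa' : ‖f y₁ - a'‖ ≤ K * ‖y₁ - y₂‖ := by
      refine le_trans haa ?_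
      rw [norm_sub_rev]
    have hsq : ‖f y₁ - f y₂‖ ^ 2 ≤ (‖v - f y₁‖ + ‖v - f y₂‖) * (K * ‖y₁ - y₂‖) :=
      sq_est v (f y₁) (f y₂) b' a' (K * ‖y₁ - y₂‖)
        (hfang y₁ b' hb') (hfang y₂ a' ha') hbb haa'
    have hb1 : ‖v - f y₁‖ ≤ K * δ := by
      rw [norm_sub_rev]
      refine le_trans (hfdist y₁) (mul_le_mul_of_nonneg_left ?_ hK.le)
      rw [← dist_eq_norm]
      exact mem_closedBall.1 hy₁
    have hb2 : ‖v - f y₂‖ ≤ K * δ := by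
      rw [norm_sub_rev]
      refine le_trans (hfdist y₂) (mul_le_mul_of_nonneg_left ?_ hK.le)
      rw [← dist_eq_norm]
      exact mem_closedBall.1 hy₂
    have hsq2 : ‖f y₁ - f y₂‖ ^ 2 ≤ (2 * K ^ 2 * δ) * ‖y₁ - y₂‖ := by
      refine le_trans hsq ?_
      have h1 : (‖v - f y₁‖ + ‖v - f y₂‖) * (K * ‖y₁ - y₂‖) ≤
          (2 * (K * δ)) * (K * ‖y₁ - y₂‖) := by
        refine mul_le_mul_of_nonneg_right (by linarith) (by positivity)
      refine le_trans h1 (le_of_eq ?_)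
      ring
    have h2 : ‖f y₁ - f y₂‖ ≤ Real.sqrt ((2 * K ^ 2 * δ) * ‖y₁ - y₂‖) := by
      have := Real.sqrt_le_sqrt hsq2
      rwa [Real.sqrt_sq (norm_nonneg _)] at this
    rwa [Real.sqrt_mul (by positivity)] at h2
  -- Euler polygons
  have hkey := fun k : ℕ => euler_key f x₀ M δ₁ C₁ δ hM0 hδ₁pos hMδ hC₁ hfM hmod (k+1) k.succ_pos
  choose Ys hY0 hYlip hYtwo using hkey
  set I : Set ℝ := Icc (0:ℝ) δ₁ with hI
  haveI hIc : CompactSpace I := isCompact_iff_compactSpace.1 isCompact_Icc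
  have hYcont : ∀ k, Continuous (Ys k) := by
    intro k
    refine (LipschitzWith.of_dist_le_mul (K := M.toNNReal) fun s t => ?_).continuous
    rw [dist_eq_norm, Real.dist_eq, Real.coe_toNNReal M hM0]
    exact hYlip k t s
  set g : ℕ → BoundedContinuousFunction I (En n) := fun k =>
    BoundedContinuousFunction.mkOfCompact ⟨fun t => Ys k t, (hYcont k).comp continuous_subtype_val⟩
    with hg
  have hYmem : ∀ k, ∀ t ∈ I, Ys k t ∈ closedBall x₀ (M * δ₁) := by
    intro k t ht
    rw [mem_closedBall, dist_eq_norm]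
    calc ‖Ys k t - x₀‖ = ‖Ys k t - Ys k 0‖ := by rw [hY0]
      _ ≤ M * |t - 0| := hYlip k 0 t
      _ ≤ M * δ₁ := by
          rw [sub_zero, abs_of_nonneg ht.1]
          exact mul_le_mul_of_nonneg_left ht.2 hM0
  set A : Set (BoundedContinuousFunction I (En n)) := {q | (∀ x : I, q x ∈ closedBall x₀ (M * δ₁)) ∧
    ∀ x y : I, dist (q x) (q y) ≤ M * dist x y} with hA
  have hgA : ∀ k, g k ∈ A := by
    intro k
    constructor
    · intro x
      exact hYmem k x x.2
    · intro x y
      show dist (Ys k x) (Ys k y) ≤ M * dist (x:ℝ) (y:ℝ)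
      rw [dist_eq_norm, Real.dist_eq]
      exact hYlip k y x
  have hequi : Equicontinuous ((↑) : A → I → En n) := by
    intro x
    rw [Metric.equicontinuousAt_iff]
    intro ε hε
    refine ⟨ε / (M + 1), by positivity, fun y hy i => ?_⟩
    calc dist (i.1 x) (i.1 y) ≤ M * dist x y := i.2.2 x y
      _ ≤ M * (ε / (M + 1)) := by
          refine mul_le_mul_of_nonneg_left ?_ hM0
          rw [dist_comm] at hy
          exact hy.le
      _ < ε := by
          rw [mul_div_assoc', div_lt_iff₀ hM1]
          nlinarith
  have hAcomp : IsCompact (closure A) :=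
    BoundedContinuousFunction.arzela_ascoli (closedBall x₀ (M * δ₁))
      (isCompact_closedBall _ _) A (fun q x hq => hq.1 x) hequi
  obtain ⟨L, _, φ, hφ, hgL⟩ := by
    set_option synthInstance.maxHeartbeats 1000000 in
    exact hAcomp.tendsto_subseq (fun k => subset_closure (hgA k))
  have hprojt : ∀ t : ℝ, max 0 (min t δ₁) ∈ I := fun t =>
    ⟨le_max_left _ _, max_le hδ₁pos.le (min_le_right _ _)⟩
  set y : ℝ → En n := fun t => L ⟨max 0 (min t δ₁), hprojt t⟩ with hy
  have hyI : ∀ t (ht : t ∈ I), y t = L ⟨t, ht⟩ := by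
    intro t ht
    have hmt : max 0 (min t δ₁) = t := by rw [min_eq_left ht.2, max_eq_right ht.1]
    exact congrArg L (Subtype.ext hmt)
  have hunif : TendstoUniformly (fun j => (g (φ j) : I → En n)) L atTop :=
    BoundedContinuousFunction.tendsto_iff_tendstoUniformly.1 hgL
  have hconv : ∀ t (ht : t ∈ I), Tendsto (fun j => Ys (φ j) t) atTop (𝓝 (y t)) := by
    intro t ht
    have h := hunif.tendsto_at ⟨t, ht⟩
    rwa [← hyI t ht] at h
  have h0I : (0:ℝ) ∈ I := ⟨le_refl _, hδ₁pos.le⟩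
  have hy0 : y 0 = x₀ := by
    have h := hconv 0 h0I
    simp only [hY0] at h
    exact tendsto_nhds_unique h tendsto_const_nhds
  have hylip : ∀ s ∈ I, ∀ t ∈ I, ‖y t - y s‖ ≤ M * |t - s| := by
    intro s hs t ht
    refine le_of_tendsto (((hconv t ht).sub (hconv s hs)).norm) ?_
    exact Eventually.of_forall fun j => hYlip (φ j) s t
  have hymem : ∀ t ∈ I, y t ∈ closedBall x₀ δ := by
    intro t ht
    rw [mem_closedBall, dist_eq_norm]
    calc ‖y t - x₀‖ = ‖y t - y 0‖ := by rw [hy0]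
      _ ≤ M * |t - 0| := hylip 0 h0I t ht
      _ ≤ M * δ₁ := by
          rw [sub_zero, abs_of_nonneg ht.1]
          exact mul_le_mul_of_nonneg_left ht.2 hM0
      _ ≤ δ := hMδ
  have hfconv : ∀ s (hs : s ∈ I), Tendsto (fun j => f (Ys (φ j) s)) atTop (𝓝 (f (y s))) := by
    intro s hs
    have h1 : Tendsto (fun j => ‖Ys (φ j) s - y s‖) atTop (𝓝 0) :=
      tendsto_iff_norm_sub_tendsto_zero.1 (hconv s hs)
    have h2 : Tendsto (fun j => C₁ * Real.sqrt ‖Ys (φ j) s - y s‖) atTop (𝓝 0) := by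
      have h3 := (Real.continuous_sqrt.tendsto 0).comp h1
      rw [Real.sqrt_zero] at h3
      have h4 := h3.const_mul C₁
      rwa [mul_zero] at h4
    rw [tendsto_iff_norm_sub_tendsto_zero]
    refine squeeze_zero (fun j => norm_nonneg _) (fun j => ?_) h2
    exact hmod _ (closedBall_subset_closedBall hMδ (hYmem (φ j) s hs)) _ (hymem s hs)
  have hytwo : ∀ s ∈ I, ∀ t ∈ I, s ≤ t →
      ‖y t - y s - (t - s) • f (y s)‖ ≤ (t - s) * (C₁ * Real.sqrt (M * (t - s))) := by
    intro s hs t ht hst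
    have hLHS : Tendsto (fun j => ‖Ys (φ j) t - Ys (φ j) s - (t - s) • f (Ys (φ j) s)‖)
        atTop (𝓝 (‖y t - y s - (t - s) • f (y s)‖)) :=
      (((hconv t ht).sub (hconv s hs)).sub ((hfconv s hs).const_smul (t - s))).norm
    have hφj : Tendsto (fun j => δ₁ / ((φ j + 1 : ℕ) : ℝ)) atTop (𝓝 0) := by
      have h0 := (tendsto_one_div_add_atTop_nhds_zero_nat (𝕜 := ℝ)).comp hφ.tendsto_atTop
      have h1 := h0.const_mul δ₁
      rw [mul_zero] at h1
      refine h1.congr fun j => ?_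
      simp only [Function.comp_apply]
      push_cast
      ring
    have hRHS : Tendsto (fun j => (t - s) * (C₁ * Real.sqrt (M * (δ₁ / ((φ j + 1 : ℕ) : ℝ)) + M * (t - s))))
        atTop (𝓝 ((t - s) * (C₁ * Real.sqrt (M * (t - s))))) := by
      have h5 : Tendsto (fun j => M * (δ₁ / ((φ j + 1 : ℕ) : ℝ)) + M * (t - s)) atTop
          (𝓝 (M * (t - s))) := by
        have h6 := (hφj.const_mul M).add_const (M * (t - s))
        rwa [mul_zero, zero_add] at h6
      have h7 := (Real.continuous_sqrt.tendsto _).comp h5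
      exact ((h7.const_mul C₁).const_mul (t - s))
    exact le_of_tendsto_of_tendsto' hLHS hRHS (fun j => hYtwo (φ j) s hs t ht hst)
  -- assemble
  refine ⟨y, fun t => f (y t), hy0, ?_, ?_, fun t _ => hfmem (y t), fun t ht => ?_⟩
  · -- derivative
    intro a ha
    rw [hasDerivWithinAt_iff_isLittleO, Asymptotics.isLittleO_iff]
    intro c hc
    have hub : ∀ t ∈ I, ‖y t - y a - (t - a) • f (y a)‖ ≤
        (2 * C₁ * Real.sqrt (M * |t - a|)) * |t - a| := by
      intro t ht
      rcases le_total a t with hat | hta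
      · have h1 := hytwo a ha t ht hat
        rw [abs_of_nonneg (sub_nonneg.2 hat)]
        refine le_trans h1 ?_
        have hq := Real.sqrt_nonneg (M * (t - a))
        have h5 : 0 ≤ C₁ * Real.sqrt (M * (t - a)) * (t - a) :=
          mul_nonneg (mul_nonneg hC₁ hq) (sub_nonneg.2 hat)
        nlinarith [h5]
      · have h1 := hytwo t ht a ha hta
        have habs : |t - a| = a - t := by
          rw [abs_of_nonpos (sub_nonpos.2 hta)]; ring
        have hdec : y t - y a - (t - a) • f (y a) =
            -(y a - y t - (a - t) • f (y t)) + (a - t) • (f (y a) - f (y t)) := by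
          module
        rw [habs, hdec]
        have hf2 : ‖f (y a) - f (y t)‖ ≤ C₁ * Real.sqrt (M * (a - t)) := by
          refine le_trans (hmod _ (hymem a ha) _ (hymem t ht)) ?_
          refine mul_le_mul_of_nonneg_left (Real.sqrt_le_sqrt ?_) hC₁
          have h3 := hylip t ht a ha
          rwa [abs_of_nonneg (sub_nonneg.2 hta)] at h3
        calc ‖-(y a - y t - (a - t) • f (y t)) + (a - t) • (f (y a) - f (y t))‖
            ≤ ‖y a - y t - (a - t) • f (y t)‖ + ‖(a - t) • (f (y a) - f (y t))‖ := by
              refine le_trans (norm_add_le _ _) ?_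
              rw [norm_neg]
          _ ≤ (a - t) * (C₁ * Real.sqrt (M * (a - t))) + (a - t) * (C₁ * Real.sqrt (M * (a - t))) := by
              refine add_le_add h1 ?_
              rw [norm_smul, Real.norm_eq_abs, abs_of_nonneg (by linarith)]
              exact mul_le_mul_of_nonneg_left hf2 (by linarith)
          _ ≤ 2 * C₁ * Real.sqrt (M * (a - t)) * (a - t) := le_of_eq (by ring)
    set B : ℝ := (c / (2 * C₁ + 1)) ^ 2 with hB
    have hBpos : 0 < B := by positivity
    have hd : (0:ℝ) < B / (M + 1) := by positivity
    filter_upwards [inter_mem (nhdsWithin_le_nhds (Metric.ball_mem_nhds a hd))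
      self_mem_nhdsWithin] with t htm
    obtain ⟨htb, htI⟩ := htm
    have h1 := hub t htI
    have h2 : Real.sqrt (M * |t - a|) ≤ c / (2 * C₁ + 1) := by
      have h3 : |t - a| ≤ B / (M + 1) := by
        have := mem_ball.1 htb
        rw [Real.dist_eq] at this
        exact this.le
      have h4 : M * |t - a| ≤ B := by
        rw [le_div_iff₀ hM1] at h3
        nlinarith [abs_nonneg (t - a)]
      calc Real.sqrt (M * |t - a|) ≤ Real.sqrt B := Real.sqrt_le_sqrt h4
        _ = c / (2 * C₁ + 1) := by rw [hB, Real.sqrt_sq (by positivity)]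
    calc ‖y t - y a - (t - a) • f (y a)‖ ≤ (2 * C₁ * Real.sqrt (M * |t - a|)) * |t - a| := h1
      _ ≤ (2 * C₁ * (c / (2 * C₁ + 1))) * |t - a| := by
          refine mul_le_mul_of_nonneg_right (mul_le_mul_of_nonneg_left h2 (by positivity))
            (abs_nonneg _)
      _ ≤ c * |t - a| := by
          refine mul_le_mul_of_nonneg_right ?_ (abs_nonneg _)
          rw [mul_div_assoc', div_le_iff₀ (by positivity)]
          nlinarith
      _ = c * ‖t - a‖ := by rw [Real.norm_eq_abs]
  · -- continuity of y'
    have hfcont : ContinuousOn f (closedBall x₀ δ) := by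
      rw [Metric.continuousOn_iff]
      intro b hb ε hε
      refine ⟨(ε / (C₁ + 1)) ^ 2, by positivity, fun a ha hab => ?_⟩
      have h1 : ‖f a - f b‖ ≤ C₁ * Real.sqrt ‖a - b‖ := hmod a ha b hb
      have h2 : Real.sqrt ‖a - b‖ < Real.sqrt ((ε / (C₁ + 1)) ^ 2) := by
        refine Real.sqrt_lt_sqrt (norm_nonneg _) ?_
        rw [← dist_eq_norm]
        exact hab
      rw [Real.sqrt_sq (by positivity)] at h2
      have h3 : C₁ * Real.sqrt ‖a - b‖ ≤ C₁ * (ε / (C₁ + 1)) :=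
        mul_le_mul_of_nonneg_left h2.le hC₁
      have h4 : C₁ * (ε / (C₁ + 1)) < ε := by
        rw [mul_div_assoc', div_lt_iff₀ (by positivity)]
        nlinarith
      rw [dist_eq_norm]
      linarith
    have hycont : ContinuousOn y I := by
      rw [Metric.continuousOn_iff]
      intro b hb ε hε
      refine ⟨ε / (M + 1), by positivity, fun a ha hab => ?_⟩
      rw [dist_eq_norm]
      calc ‖y a - y b‖ ≤ M * |a - b| := hylip b hb a ha
        _ ≤ M * (ε / (M + 1)) := by
            refine mul_le_mul_of_nonneg_left ?_ hM0
            rw [Real.dist_eq] at hab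
            exact hab.le
        _ < ε := by
            rw [mul_div_assoc', div_lt_iff₀ hM1]
            nlinarith
    exact hfcont.comp hycont (fun t ht => hymem t ht)
  · -- the bound
    calc ‖f (y t) - v‖ ≤ K * ‖y t - x₀‖ := hfdist _
      _ ≤ K * (M * t) := by
          refine mul_le_mul_of_nonneg_left ?_ hK.le
          have := hylip 0 h0I t ht
          rwa [hy0, sub_zero, abs_of_nonneg ht.1] at this
      _ = K * M * t := by ring
end

section
/- Let F satisfy hypothesis (F), let H satisfy hypothesis (H), and let 𝒮 ⊆ ℝⁿ be a closed target set. Let x ∈ ℝⁿ∖𝒮, let x(·) be an optimal trajectory starting from x and reaching 𝒮 in time T(x), let x̄ = x(T(x)), and let ξ be a proximal inner unit normal to 𝒮 at x̄ with H(x̄, ξ) = 0. If p : [0,T(x)] → ℝⁿ is an absolutely continuous arc satisfying ẋ(t) = ∇_p H(x(t),p(t)) and −ṗ(t) ∈ ∂_x H(x(t),p(t)) for a.e. t ∈ [0,T(x)], together with the terminal condition p(T(x)) = ξ, then H(x(t), p(t)) = 0 for all t ∈ [0, T(x)]. -/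
open Set MeasureTheory Filter Topology Metric
open scoped ENNReal Pointwise

section AuxBasics

variable {n : ℕ}

lemma ham_bddAbove {F : En n → Set (En n)} (hcpt : IsCompact (F x)) (p : En n) :
    BddAbove ((fun v => (inner ℝ p v : ℝ)) '' F x) :=
  (hcpt.image ((continuous_const.inner continuous_id : Continuous fun v : En n => (inner ℝ p v : ℝ)))).bddAbove

lemma inner_le_ham {F : En n → Set (En n)} {x : En n} (hcpt : IsCompact (F x))
    {v : En n} (hv : v ∈ F x) (p : En n) : (inner ℝ p v : ℝ) ≤ Ham F x p :=
  le_csSup (ham_bddAbove hcpt p) ⟨v, hv, rfl⟩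

lemma ham_le {F : En n → Set (En n)} {x : En n} (hne : (F x).Nonempty)
    {p : En n} {c : ℝ} (h : ∀ v ∈ F x, (inner ℝ p v : ℝ) ≤ c) : Ham F x p ≤ c := by
  apply csSup_le (hne.image _)
  rintro _ ⟨v, hv, rfl⟩; exact h v hv

lemma ham_exists_max {F : En n → Set (En n)} {x : En n} (hne : (F x).Nonempty)
    (hcpt : IsCompact (F x)) (p : En n) : ∃ v ∈ F x, Ham F x p = (inner ℝ p v : ℝ) := by
  obtain ⟨v, hv, hmax⟩ := hcpt.exists_isMaxOn hne
    ((continuous_const.inner continuous_id : Continuous fun v : En n => (inner ℝ p v : ℝ)).continuousOn (s := F x))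
  refine ⟨v, hv, le_antisymm (ham_le hne fun w hw => hmax hw) (inner_le_ham hcpt hv p)⟩

lemma ham_zero {F : En n → Set (En n)} {x : En n} (hne : (F x).Nonempty)
    (hcpt : IsCompact (F x)) : Ham F x (0 : En n) = 0 := by
  obtain ⟨v, hv, h⟩ := ham_exists_max hne hcpt (0 : En n)
  rw [h, inner_zero_left]

end AuxBasics


section AuxLip

variable {n : ℕ}

lemma ham_sub_le {F : En n → Set (En n)} {K : ℝ} (hF : HypF F K) (p x₁ x₂ : En n) :
    Ham F x₂ p - Ham F x₁ p ≤ K * ‖p‖ * ‖x₁ - x₂‖ := by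
  obtain ⟨v, hv, hveq⟩ := ham_exists_max (hF.2.1 x₂).1 (hF.2.1 x₂).2.2 p
  obtain ⟨v', hv', hle⟩ := hF.2.2 x₁ x₂ v hv
  have h1 : (inner ℝ p v : ℝ) ≤ (inner ℝ p v' : ℝ) + ‖p‖ * ‖v - v'‖ := by
    have := real_inner_le_norm p (v - v')
    have h2 : (inner ℝ p (v - v') : ℝ) = inner ℝ p v - inner ℝ p v' := inner_sub_right p v v'
    linarith
  have h3 : (inner ℝ p v' : ℝ) ≤ Ham F x₁ p := inner_le_ham (hF.2.1 x₁).2.2 hv' p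
  have h4 : ‖p‖ * ‖v - v'‖ ≤ ‖p‖ * (K * ‖x₁ - x₂‖) :=
    mul_le_mul_of_nonneg_left hle (norm_nonneg p)
  rw [hveq]; nlinarith [norm_nonneg p]

lemma ham_abs_sub_x {F : En n → Set (En n)} {K : ℝ} (hF : HypF F K) (p x₁ x₂ : En n) :
    |Ham F x₁ p - Ham F x₂ p| ≤ K * ‖p‖ * ‖x₁ - x₂‖ := by
  rw [abs_sub_le_iff]
  constructor
  · have := ham_sub_le hF p x₂ x₁
    rwa [show ‖x₂ - x₁‖ = ‖x₁ - x₂‖ from norm_sub_rev _ _] at this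
  · exact ham_sub_le hF p x₁ x₂

lemma ham_cont_x {F : En n → Set (En n)} {K : ℝ} (hF : HypF F K) (p : En n) :
    Continuous (fun z => Ham F z p) := by
  rcases le_or_gt (K * ‖p‖) 0 with h | h
  · have : ∀ z w : En n, Ham F z p = Ham F w p := by
      intro z w
      have h1 := ham_abs_sub_x hF p z w
      have h2 : K * ‖p‖ * ‖z - w‖ ≤ 0 := mul_nonpos_of_nonpos_of_nonneg h (norm_nonneg _)
      have := abs_nonneg (Ham F z p - Ham F w p)
      have : |Ham F z p - Ham F w p| = 0 := le_antisymm (h1.trans h2) this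
      have := abs_eq_zero.mp this
      linarith
    simpa [funext fun z => this z 0] using continuous_const
  · refine (LipschitzWith.of_dist_le_mul (K := ⟨K * ‖p‖, h.le⟩) (f := fun z => Ham F z p)
      fun a b => ?_).continuous
    rw [Real.dist_eq, dist_eq_norm]; exact ham_abs_sub_x hF p a b

lemma ham_sub_le_p {F : En n → Set (En n)} {x : En n} (hne : (F x).Nonempty)
    (hcpt : IsCompact (F x)) {M : ℝ} (hM : ∀ v ∈ F x, ‖v‖ ≤ M) (p q : En n) :
    Ham F x p - Ham F x q ≤ M * ‖p - q‖ := by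
  obtain ⟨v, hv, hveq⟩ := ham_exists_max hne hcpt p
  have h1 : (inner ℝ (p - q) v : ℝ) ≤ ‖p - q‖ * ‖v‖ := real_inner_le_norm _ _
  have h2 : (inner ℝ (p - q) v : ℝ) = inner ℝ p v - inner ℝ q v := inner_sub_left p q v
  have h3 : (inner ℝ q v : ℝ) ≤ Ham F x q := inner_le_ham hcpt hv q
  have h4 : ‖p - q‖ * ‖v‖ ≤ ‖p - q‖ * M :=
    mul_le_mul_of_nonneg_left (hM v hv) (norm_nonneg _)
  rw [hveq]; nlinarith

lemma ham_midpoint_p {F : En n → Set (En n)} {x : En n} (hne : (F x).Nonempty)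
    (hcpt : IsCompact (F x)) (p q : En n) :
    Ham F x ((1 / 2 : ℝ) • (p + q)) ≤ (Ham F x p + Ham F x q) / 2 := by
  apply ham_le hne
  intro v hv
  have h1 : (inner ℝ ((1 / 2 : ℝ) • (p + q)) v : ℝ)
      = (1 / 2) * ((inner ℝ p v : ℝ) + (inner ℝ q v : ℝ)) := by
    rw [real_inner_smul_left, inner_add_left]
  have h2 : (inner ℝ p v : ℝ) ≤ Ham F x p := inner_le_ham hcpt hv p
  have h3 : (inner ℝ q v : ℝ) ≤ Ham F x q := inner_le_ham hcpt hv q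
  rw [h1]; linarith

end AuxLip

section AuxConvex

variable {n : ℕ}

/-- Derivative of `f` along a line, from the gradient. -/
lemma hasDerivAt_line {f : En n → ℝ} {x g : En n} (hg : HasGradientAt f g x) (w : En n) :
    HasDerivAt (fun t : ℝ => f (x + t • w)) ((inner ℝ g w : ℝ)) 0 := by
  have hline : HasDerivAt (fun t : ℝ => x + t • w) w 0 := by
    simpa using ((hasDerivAt_id (0 : ℝ)).smul_const w).const_add x
  have hfd : HasFDerivAt f (InnerProductSpace.toDual ℝ (En n) g) x :=
    hasGradientAt_iff_hasFDerivAt.mp hg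
  have hfd' : HasFDerivAt f (InnerProductSpace.toDual ℝ (En n) g) (x + (0:ℝ) • w) := by
    simpa using hfd
  have := hfd'.comp_hasDerivAt (x := (0:ℝ)) hline
  simpa [InnerProductSpace.toDual_apply_apply, Function.comp_def] using this

/-- A midpoint-convex continuous function is above its tangent planes. -/
lemma midpoint_support {f : En n → ℝ} (hc : Continuous f)
    (hm : ∀ a b : En n, f ((1 / 2 : ℝ) • (a + b)) ≤ (f a + f b) / 2)
    {x g : En n} (hg : HasGradientAt f g x) (z : En n) :
    f x + (inner ℝ g (z - x) : ℝ) ≤ f z := by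
  set φ : ℝ → ℝ := fun t => f (x + t • (z - x)) with hφ
  have hφc : Continuous φ := hc.comp (by continuity)
  have hφm : ∀ s t : ℝ, φ ((s + t) / 2) ≤ (φ s + φ t) / 2 := by
    intro s t
    have hv : x + ((s + t) / 2) • (z - x)
        = (1 / 2 : ℝ) • ((x + s • (z - x)) + (x + t • (z - x))) := by
      module
    show f (x + ((s + t) / 2) • (z - x)) ≤ (f (x + s • (z - x)) + f (x + t • (z - x))) / 2
    rw [hv]
    exact hm _ _
  have hcvx : ∀ t ∈ Icc (0:ℝ) 1, φ t ≤ φ 0 + t * (φ 1 - φ 0) := by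
    set χ : ℝ → ℝ := fun t => φ t - (φ 0 + t * (φ 1 - φ 0)) with hχ
    have hχc : Continuous χ := by fun_prop
    have hχm : ∀ s t : ℝ, χ ((s + t) / 2) ≤ (χ s + χ t) / 2 := by
      intro s t
      have h1 := hφm s t
      show φ ((s + t) / 2) - (φ 0 + ((s + t) / 2) * (φ 1 - φ 0))
          ≤ (φ s - (φ 0 + s * (φ 1 - φ 0)) + (φ t - (φ 0 + t * (φ 1 - φ 0)))) / 2
      ring_nf
      ring_nf at h1
      linarith
    have hχ0 : χ 0 = 0 := by show φ 0 - (φ 0 + 0 * (φ 1 - φ 0)) = 0; ring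
    have hχ1 : χ 1 = 0 := by show φ 1 - (φ 0 + 1 * (φ 1 - φ 0)) = 0; ring
    suffices h : ∀ t ∈ Icc (0:ℝ) 1, χ t ≤ 0 by
      intro t ht; have := h t ht; simp only [hχ] at this; linarith
    by_contra hcon
    push_neg at hcon
    obtain ⟨t₀, ht₀, ht₀pos⟩ := hcon
    obtain ⟨θ, hθmem, hθmax⟩ := isCompact_Icc.exists_isMaxOn (nonempty_Icc.mpr zero_le_one)
      hχc.continuousOn
    set m := χ θ with hm'
    have hmpos : 0 < m := lt_of_lt_of_le ht₀pos (hθmax ht₀)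
    set A : Set ℝ := Icc 0 1 ∩ χ ⁻¹' {m} with hA
    have hAclosed : IsClosed A := isClosed_Icc.inter (isClosed_singleton.preimage hχc)
    have hAne : A.Nonempty := ⟨θ, hθmem, rfl⟩
    have hAbdd : BddBelow A := (bddBelow_Icc : BddBelow (Icc (0:ℝ) 1)).mono inter_subset_left
    set θ₀ := sInf A with hθ₀
    have hθ₀A : θ₀ ∈ A := hAclosed.csInf_mem hAne hAbdd
    have hθ₀Icc : θ₀ ∈ Icc (0:ℝ) 1 := hθ₀A.1
    have hθ₀v : χ θ₀ = m := hθ₀A.2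
    have h0 : θ₀ ≠ 0 := fun h => by rw [h, hχ0] at hθ₀v; linarith
    have h1 : θ₀ ≠ 1 := fun h => by rw [h, hχ1] at hθ₀v; linarith
    have hθ₀pos : 0 < θ₀ := lt_of_le_of_ne hθ₀Icc.1 (Ne.symm h0)
    have hθ₀lt : θ₀ < 1 := lt_of_le_of_ne hθ₀Icc.2 h1
    set δ := min θ₀ (1 - θ₀) with hδ
    have hδpos : 0 < δ := lt_min hθ₀pos (by linarith)
    have haIcc : θ₀ - δ ∈ Icc (0:ℝ) 1 := by
      constructor
      · have : δ ≤ θ₀ := min_le_left _ _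
        linarith
      · linarith
    have hbIcc : θ₀ + δ ∈ Icc (0:ℝ) 1 := by
      constructor
      · linarith
      · have : δ ≤ 1 - θ₀ := min_le_right _ _
        linarith
    have hmid : ((θ₀ - δ) + (θ₀ + δ)) / 2 = θ₀ := by ring
    have hineq := hχm (θ₀ - δ) (θ₀ + δ)
    rw [hmid, hθ₀v] at hineq
    have hb_le : χ (θ₀ + δ) ≤ m := hθmax hbIcc
    have ha_le : χ (θ₀ - δ) ≤ m := hθmax haIcc
    have ha_ne : χ (θ₀ - δ) ≠ m := by
      intro h
      have : θ₀ - δ ∈ A := ⟨haIcc, h⟩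
      have := csInf_le hAbdd this
      linarith
    have ha_lt : χ (θ₀ - δ) < m := lt_of_le_of_ne ha_le ha_ne
    clear_value φ χ m A θ₀ δ
    have hfin : χ (θ₀ - δ) + χ (θ₀ + δ) < m + m := by linarith
    linarith
  -- slope inequality and limit
  have hd : HasDerivAt φ ((inner ℝ g (z - x) : ℝ)) 0 := hasDerivAt_line hg (z - x)
  have htend : Tendsto (slope φ 0) (𝓝[>] (0:ℝ)) (𝓝 ((inner ℝ g (z - x) : ℝ))) :=
    (hasDerivAt_iff_tendsto_slope.mp hd).mono_left
      (nhdsWithin_mono 0 (fun t ht => ne_of_gt ht))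
  have hbound : ∀ᶠ t in 𝓝[>] (0:ℝ), slope φ 0 t ≤ φ 1 - φ 0 := by
    filter_upwards [Ioc_mem_nhdsGT_of_mem (Set.mem_Ico.mpr ⟨le_refl (0:ℝ), zero_lt_one⟩)]
      with t ht
    have hcv := hcvx t ⟨ht.1.le, ht.2⟩
    rw [slope_def_field]
    rw [div_le_iff₀ (by simpa using ht.1)]
    simp only [sub_zero]
    nlinarith [ht.1]
  have hfin : (inner ℝ g (z - x) : ℝ) ≤ φ 1 - φ 0 :=
    le_of_tendsto htend hbound
  have hφ0 : φ 0 = f x := by simp [hφ]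
  have hφ1 : φ 1 = f z := by simp [hφ]
  rw [hφ0, hφ1] at hfin
  linarith

/-- The gradient of a Lipschitz function is bounded by the Lipschitz constant. -/
lemma grad_norm_le_of_lip {f : En n → ℝ} {L : ℝ} (hL : 0 ≤ L)
    (hf : ∀ a b : En n, |f a - f b| ≤ L * ‖a - b‖) {x g : En n}
    (hg : HasGradientAt f g x) : ‖g‖ ≤ L := by
  rcases eq_or_ne g 0 with h | h
  · simp [h, hL]
  have hd : HasDerivAt (fun t : ℝ => f (x + t • g)) ((inner ℝ g g : ℝ)) 0 := hasDerivAt_line hg g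
  have htend : Tendsto (fun t => |slope (fun t : ℝ => f (x + t • g)) 0 t|) (𝓝[>] (0:ℝ))
      (𝓝 (|(inner ℝ g g : ℝ)|)) :=
    (continuous_abs.continuousAt.tendsto.comp
      ((hasDerivAt_iff_tendsto_slope.mp hd).mono_left
        (nhdsWithin_mono 0 (fun t ht => ne_of_gt ht))))
  have hbound : ∀ᶠ t in 𝓝[>] (0:ℝ), |slope (fun t : ℝ => f (x + t • g)) 0 t| ≤ L * ‖g‖ := by
    filter_upwards [self_mem_nhdsWithin] with t ht
    rw [slope_def_field]
    have hnum : |f (x + t • g) - f (x + (0:ℝ) • g)| ≤ L * (|t| * ‖g‖) := by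
      have := hf (x + t • g) (x + (0:ℝ) • g)
      have heq : (x + t • g) - (x + (0:ℝ) • g) = t • g := by module
      rw [heq] at this
      simpa [norm_smul, abs_mul] using this
    rw [abs_div]
    rw [div_le_iff₀ (by simpa [abs_of_pos (show (0:ℝ) < t from ht)] using ht)]
    calc |f (x + t • g) - f (x + (0:ℝ) • g)| ≤ L * (|t| * ‖g‖) := hnum
      _ = L * ‖g‖ * |t - 0| := by rw [sub_zero]; ring
  have hfin : |(inner ℝ g g : ℝ)| ≤ L * ‖g‖ := le_of_tendsto htend hbound
  have : ‖g‖ * ‖g‖ ≤ L * ‖g‖ := by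
    rw [← real_inner_self_eq_norm_mul_norm]
    exact (le_abs_self _).trans hfin
  have hgpos : 0 < ‖g‖ := norm_pos_iff.mpr h
  exact le_of_mul_le_mul_right (by linarith) hgpos

end AuxConvex


section AuxClarke

variable {n : ℕ}

lemma hasGradientAt_const_mul_norm_sq (C : ℝ) (w : En n) :
    HasGradientAt (fun z : En n => C * ‖z‖ ^ 2) ((2 * C) • w) w := by
  have h0 := (hasFDerivAt_id w).inner ℝ (hasFDerivAt_id w)
  have h1 := h0.const_mul C
  have hfn : (fun z : En n => C * (inner ℝ z z : ℝ)) = fun z : En n => C * ‖z‖ ^ 2 := by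
    funext z; rw [real_inner_self_eq_norm_sq]
  simp only [id_eq] at h1
  rw [hfn] at h1
  have hCLM : C • ((fderivInnerCLM ℝ ((id w : En n), (id w : En n))).comp
      ((ContinuousLinearMap.id ℝ (En n)).prod (ContinuousLinearMap.id ℝ (En n))))
      = InnerProductSpace.toDual ℝ (En n) ((2 * C) • w) := by
    apply ContinuousLinearMap.ext
    intro u
    simp only [ContinuousLinearMap.smul_apply, ContinuousLinearMap.coe_comp',
      Function.comp_apply, ContinuousLinearMap.prod_apply, ContinuousLinearMap.coe_id', id_eq,
      fderivInnerCLM_apply, InnerProductSpace.toDual_apply_apply, smul_eq_mul]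
    rw [real_inner_smul_left, real_inner_comm u w]
    ring
  rw [hasGradientAt_iff_hasFDerivAt, ← hCLM]
  exact h1

/-- Clarke generalized gradients of `Ham F · p` satisfy the semiconvexity support
inequality and the Lipschitz norm bound. -/
lemma clarke_props {F : En n → Set (En n)} {K c₀ K₁ : ℝ} {gradp : En n → En n → En n}
    (hF : HypF F K) (hH : HypH F gradp c₀ K₁) (p x : En n) {ζ : En n}
    (hζ : ζ ∈ clarkeGradAt (fun z => Ham F z p) x) :
    (∀ z : En n, Ham F x p + (inner ℝ ζ (z - x) : ℝ) - (c₀ * ‖p‖) * ‖z - x‖ ^ 2 ≤ Ham F z p)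
      ∧ ‖ζ‖ ≤ K * ‖p‖ := by
  set S₀ : Set (En n) := {ζ |
    (∀ z : En n, Ham F x p + (inner ℝ ζ (z - x) : ℝ) - (c₀ * ‖p‖) * ‖z - x‖ ^ 2 ≤ Ham F z p)
      ∧ ‖ζ‖ ≤ K * ‖p‖} with hS₀
  suffices h : clarkeGradAt (fun z => Ham F z p) x ⊆ S₀ by exact h hζ
  apply convexHull_min
  · -- base set included
    rintro v ⟨y, g, hy, hgrad, hgv⟩
    have hKp : (0:ℝ) ≤ K * ‖p‖ := mul_nonneg hF.1.le (norm_nonneg p)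
    have hlip : ∀ a b : En n, |Ham F a p - Ham F b p| ≤ (K * ‖p‖) * ‖a - b‖ := by
      intro a b
      have := ham_abs_sub_x hF p a b
      linarith [this]
    have hgbd : ∀ i, ‖g i‖ ≤ K * ‖p‖ := fun i => grad_norm_le_of_lip hKp hlip (hgrad i)
    constructor
    · -- support inequality, by passing to the limit
      intro z
      set C : ℝ := c₀ * ‖p‖ with hC
      have hCnn : 0 ≤ C := mul_nonneg hH.1 (norm_nonneg p)
      -- support inequality at each yᵢ
      have hsupp : ∀ i, Ham F (y i) p + (inner ℝ (g i) (z - y i) : ℝ) - C * ‖z - y i‖ ^ 2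
          ≤ Ham F z p := by
        intro i
        set f' : En n → ℝ := fun w => Ham F w p + C * ‖w‖ ^ 2 with hf'
        have hc : Continuous f' :=
          (ham_cont_x hF p).add (continuous_const.mul (continuous_norm.pow 2))
        have hmid : ∀ a b : En n, f' ((1 / 2 : ℝ) • (a + b)) ≤ (f' a + f' b) / 2 := by
          intro a b
          have h1 := hH.2.2.1 p a b
          have hpar : ‖(1 / 2 : ℝ) • (a + b)‖ ^ 2
              = (‖a‖ ^ 2 + ‖b‖ ^ 2) / 2 - ‖a - b‖ ^ 2 / 4 := by
            have e1 : ‖a + b‖ ^ 2 = ‖a‖ ^ 2 + 2 * (inner ℝ a b : ℝ) + ‖b‖ ^ 2 :=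
              norm_add_sq_real a b
            have e2 : ‖a - b‖ ^ 2 = ‖a‖ ^ 2 - 2 * (inner ℝ a b : ℝ) + ‖b‖ ^ 2 :=
              norm_sub_sq_real a b
            have e3 : ‖(1 / 2 : ℝ) • (a + b)‖ ^ 2 = (1 / 4) * ‖a + b‖ ^ 2 := by
              rw [norm_smul]
              rw [Real.norm_eq_abs, abs_of_nonneg (by norm_num : (0:ℝ) ≤ 1/2)]
              ring
            rw [e3, e1]
            linarith
          show Ham F ((1 / 2 : ℝ) • (a + b)) p + C * ‖(1 / 2 : ℝ) • (a + b)‖ ^ 2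
              ≤ (Ham F a p + C * ‖a‖ ^ 2 + (Ham F b p + C * ‖b‖ ^ 2)) / 2
          rw [hpar]
          nlinarith [mul_nonneg hCnn (sq_nonneg ‖a - b‖)]
        have hgrad' : HasGradientAt f' (g i + (2 * C) • (y i)) (y i) := by
          have := (hasGradientAt_iff_hasFDerivAt.mp (hgrad i)).add
            (hasGradientAt_iff_hasFDerivAt.mp (hasGradientAt_const_mul_norm_sq C (y i)))
          rw [hasGradientAt_iff_hasFDerivAt]
          rw [map_add]
          exact this
        have := midpoint_support hc hmid hgrad' z
        have hexp : (inner ℝ (g i + (2 * C) • (y i)) (z - y i) : ℝ)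
            = (inner ℝ (g i) (z - y i) : ℝ) + 2 * C * (inner ℝ (y i) (z - y i) : ℝ) := by
          rw [inner_add_left, real_inner_smul_left]
        have hsq : ‖z - y i‖ ^ 2 = ‖z‖ ^ 2 - 2 * (inner ℝ (y i) z : ℝ) + ‖y i‖ ^ 2 := by
          rw [norm_sub_sq_real, real_inner_comm z (y i)]
        have hyz : (inner ℝ (y i) (z - y i) : ℝ) = (inner ℝ (y i) z : ℝ) - ‖y i‖ ^ 2 := by
          rw [inner_sub_right, real_inner_self_eq_norm_sq]
        show Ham F (y i) p + (inner ℝ (g i) (z - y i) : ℝ) - C * ‖z - y i‖ ^ 2 ≤ Ham F z p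
        simp only [hf'] at this
        rw [hexp, hyz] at this
        nlinarith [this]
      -- pass to the limit i → ∞
      have hHamy : Tendsto (fun i => Ham F (y i) p) atTop (𝓝 (Ham F x p)) :=
        ((ham_cont_x hF p).continuousAt.tendsto).comp hy
      have hinner : Tendsto (fun i => (inner ℝ (g i) (z - y i) : ℝ)) atTop
          (𝓝 ((inner ℝ v (z - x) : ℝ))) :=
        hgv.inner (tendsto_const_nhds.sub hy)
      have hnormy : Tendsto (fun i => ‖z - y i‖ ^ 2) atTop (𝓝 (‖z - x‖ ^ 2)) :=
        ((tendsto_const_nhds.sub hy).norm).pow 2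
      have hlim : Tendsto (fun i => Ham F (y i) p + (inner ℝ (g i) (z - y i) : ℝ)
          - (c₀ * ‖p‖) * ‖z - y i‖ ^ 2) atTop
          (𝓝 (Ham F x p + (inner ℝ v (z - x) : ℝ) - (c₀ * ‖p‖) * ‖z - x‖ ^ 2)) :=
        (hHamy.add hinner).sub (hnormy.const_mul _)
      exact le_of_tendsto hlim (Eventually.of_forall fun i => hsupp i)
    · -- norm bound
      have : Tendsto (fun i => ‖g i‖) atTop (𝓝 ‖v‖) := hgv.norm
      exact le_of_tendsto this (Eventually.of_forall hgbd)
  · -- S₀ is convex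
    rintro a ⟨ha1, ha2⟩ b ⟨hb1, hb2⟩ θ₁ θ₂ hθ₁ hθ₂ hθsum
    constructor
    · intro z
      have h1 := ha1 z
      have h2 := hb1 z
      have hip : (inner ℝ (θ₁ • a + θ₂ • b) (z - x) : ℝ)
          = θ₁ * (inner ℝ a (z - x) : ℝ) + θ₂ * (inner ℝ b (z - x) : ℝ) := by
        rw [inner_add_left, real_inner_smul_left, real_inner_smul_left]
      rw [hip, show θ₂ = 1 - θ₁ from by linarith]
      nlinarith [mul_le_mul_of_nonneg_left h1 hθ₁,
        mul_le_mul_of_nonneg_left h2 (by linarith : (0:ℝ) ≤ 1 - θ₁)]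
    · calc ‖θ₁ • a + θ₂ • b‖ ≤ ‖θ₁ • a‖ + ‖θ₂ • b‖ := norm_add_le _ _
        _ = θ₁ * ‖a‖ + θ₂ * ‖b‖ := by
            rw [norm_smul, norm_smul, Real.norm_eq_abs, Real.norm_eq_abs,
              abs_of_nonneg hθ₁, abs_of_nonneg hθ₂]
        _ ≤ θ₁ * (K * ‖p‖) + θ₂ * (K * ‖p‖) := by
            have := mul_le_mul_of_nonneg_left ha2 hθ₁
            have := mul_le_mul_of_nonneg_left hb2 hθ₂
            linarith
        _ = K * ‖p‖ := by rw [← add_mul, hθsum, one_mul]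

end AuxClarke


section AuxConst

/-- For a continuous monotone function with a.e. derivative `c` on `(a,b)`,
`c * (b - a) ≤ g b - g a`. -/
lemma stieltjes_aux {g : ℝ → ℝ} (hmono : Monotone g) (hcont : Continuous g)
    {a b c : ℝ} (hab : a ≤ b)
    (hg' : ∀ᵐ t ∂(volume : Measure ℝ), t ∈ Ioo a b → HasDerivAt g c t) :
    c * (b - a) ≤ g b - g a := by
  rcases eq_or_lt_of_le hab with rfl | hlt
  · simp
  set G := hmono.stieltjesFunction with hG
  have hGeq : ∀ x, G x = g x := by
    intro x
    rw [hG, hmono.stieltjesFunction_eq]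
    exact rightLim_eq_of_tendsto
      ((hcont.tendsto x).mono_left nhdsWithin_le_nhds)
  have hae := hmono.ae_hasDerivAt
  set r : ℝ → ℝ := fun t => (Measure.rnDeriv G.measure volume t).toReal with hr
  have haeIoo : ∀ᵐ t ∂(volume : Measure ℝ), t ∈ Ioo a b → r t = c := by
    filter_upwards [hae, hg'] with t h1 h2 ht
    exact HasDerivAt.unique h1 (h2 ht)
  have haeIoo' : ∀ᵐ t ∂(volume.restrict (Ioo a b)), r t = c :=
    (ae_restrict_iff' measurableSet_Ioo).mpr haeIoo
  have hfin : G.measure (Ioo a b) < ⊤ := by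
    calc G.measure (Ioo a b) ≤ G.measure (Ioc a b) := measure_mono Ioo_subset_Ioc_self
      _ = ENNReal.ofReal (G b - G a) := G.measure_Ioc a b
      _ < ⊤ := ENNReal.ofReal_lt_top
  have hint : ∫ t in Ioo a b, r t ∂(volume : Measure ℝ)
      = (∫⁻ t in Ioo a b, Measure.rnDeriv G.measure volume t ∂volume).toReal := by
    apply integral_toReal
    · exact (Measure.measurable_rnDeriv G.measure volume).aemeasurable.restrict
    · refine ae_restrict_of_ae ?_
      exact Measure.rnDeriv_lt_top G.measure volume
  have hle : (∫⁻ t in Ioo a b, Measure.rnDeriv G.measure volume t ∂volume)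
      ≤ G.measure (Ioo a b) := Measure.setLIntegral_rnDeriv_le _
  have hint2 : ∫ t in Ioo a b, r t ∂(volume : Measure ℝ) = c * (b - a) := by
    rw [setIntegral_congr_ae measurableSet_Ioo (by filter_upwards [haeIoo] with t h ht using h ht)]
    simp [Real.volume_Ioo, ENNReal.toReal_ofReal (by linarith : (0:ℝ) ≤ b - a)]
    rw [max_eq_left (by linarith : (0:ℝ) ≤ b - a)]
    ring
  have : c * (b - a) ≤ (G.measure (Ioo a b)).toReal := by
    rw [← hint2, hint]
    exact ENNReal.toReal_mono hfin.ne hle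
  calc c * (b - a) ≤ (G.measure (Ioo a b)).toReal := this
    _ ≤ (G.measure (Ioc a b)).toReal :=
        ENNReal.toReal_mono (by rw [G.measure_Ioc]; exact ENNReal.ofReal_ne_top)
          (measure_mono Ioo_subset_Ioc_self)
    _ = G b - G a := by
        rw [G.measure_Ioc]
        rcases le_or_gt (G b - G a) 0 with h | h
        · rw [ENNReal.ofReal_of_nonpos h]
          simp only [ENNReal.toReal_zero]
          have := hmono (le_of_lt hlt)
          rw [hGeq, hGeq]
          rw [hGeq, hGeq] at h
          linarith [hmono hab]
        · rw [ENNReal.toReal_ofReal h.le]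
    _ = g b - g a := by rw [hGeq, hGeq]

/-- A Lipschitz function with a.e. vanishing derivative on `(a,b)` is constant on `[a,b]`. -/
lemma lipschitz_deriv_zero_const {f : ℝ → ℝ} {L : NNReal} (hf : LipschitzWith L f)
    {a b : ℝ} (hab : a ≤ b)
    (hd : ∀ᵐ t ∂(volume : Measure ℝ), t ∈ Ioo a b → HasDerivAt f 0 t) : f b = f a := by
  have hlip : ∀ s t : ℝ, |f s - f t| ≤ (L : ℝ) * |s - t| := by
    intro s t
    have := hf.dist_le_mul s t
    rwa [Real.dist_eq, Real.dist_eq] at this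
  -- monotone auxiliary functions
  have hg₁ : Monotone (fun t => (L : ℝ) * t + f t) := by
    intro s t hst
    have h1 := hlip t s
    have h2 : |f t - f s| ≤ (L : ℝ) * (t - s) := by
      rwa [abs_of_nonneg (by linarith : (0:ℝ) ≤ t - s)] at h1
    have := abs_le.mp h2
    simp only
    linarith [this.1]
  have hg₂ : Monotone (fun t => (L : ℝ) * t - f t) := by
    intro s t hst
    have h1 := hlip t s
    have h2 : |f t - f s| ≤ (L : ℝ) * (t - s) := by
      rwa [abs_of_nonneg (by linarith : (0:ℝ) ≤ t - s)] at h1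
    have := abs_le.mp h2
    simp only
    linarith [this.2]
  have hc₁ : Continuous (fun t => (L : ℝ) * t + f t) :=
    (continuous_const.mul continuous_id).add hf.continuous
  have hc₂ : Continuous (fun t => (L : ℝ) * t - f t) :=
    (continuous_const.mul continuous_id).sub hf.continuous
  have hd₁ : ∀ᵐ t ∂(volume : Measure ℝ), t ∈ Ioo a b →
      HasDerivAt (fun t => (L : ℝ) * t + f t) (L : ℝ) t := by
    filter_upwards [hd] with t ht htIoo
    have h0 : HasDerivAt (fun t : ℝ => (L : ℝ) * t) (L : ℝ) t := by
      simpa using (hasDerivAt_id t).const_mul (L : ℝ)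
    exact (h0.add (ht htIoo)).congr_deriv (add_zero _)
  have hd₂ : ∀ᵐ t ∂(volume : Measure ℝ), t ∈ Ioo a b →
      HasDerivAt (fun t => (L : ℝ) * t - f t) (L : ℝ) t := by
    filter_upwards [hd] with t ht htIoo
    have h0 : HasDerivAt (fun t : ℝ => (L : ℝ) * t) (L : ℝ) t := by
      simpa using (hasDerivAt_id t).const_mul (L : ℝ)
    exact (h0.sub (ht htIoo)).congr_deriv (sub_zero _)
  have h1 := stieltjes_aux hg₁ hc₁ hab hd₁
  have h2 := stieltjes_aux hg₂ hc₂ hab hd₂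
  have e1 : (L : ℝ) * b + f b - ((L : ℝ) * a + f a) = (L:ℝ) * (b - a) + (f b - f a) := by ring
  have e2 : (L : ℝ) * b - f b - ((L : ℝ) * a - f a) = (L:ℝ) * (b - a) - (f b - f a) := by ring
  rw [e1] at h1
  rw [e2] at h2
  linarith

end AuxConst


section AuxFTC

/-- Lebesgue differentiation: the primitive of an interval-integrable function has the
integrand as derivative at almost every point of the open interval. -/
lemma ae_hasDerivAt_primitive {E : Type*} [NormedAddCommGroup E] [NormedSpace ℝ E]
    [CompleteSpace E] {T : ℝ} (hT : 0 ≤ T) {v : ℝ → E}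
    (hv : IntervalIntegrable v volume 0 T) :
    ∀ᵐ t ∂(volume : Measure ℝ), t ∈ Ioo 0 T →
      HasDerivAt (fun u : ℝ => ∫ s in (0:ℝ)..u, v s) (v t) t := by
  set f : ℝ → E := (Ioc 0 T).indicator v with hf
  have hInt : Integrable f volume := by
    rw [hf]
    exact (IntegrableOn.integrable_indicator hv.1 measurableSet_Ioc)
  have hloc : LocallyIntegrable f volume := hInt.locallyIntegrable
  have key := IsUnifLocDoublingMeasure.ae_tendsto_average (μ := (volume : Measure ℝ)) hloc 1
  have hvsub : ∀ {c d : ℝ}, c ∈ Icc 0 T → d ∈ Icc 0 T → IntervalIntegrable v volume c d := by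
    intro c d hc hd
    apply hv.mono_set
    rw [uIcc_of_le hT]
    exact uIcc_subset_Icc hc hd
  filter_upwards [key] with t ht htIoo
  have htmem : t ∈ Ioc 0 T := ⟨htIoo.1, htIoo.2.le⟩
  have hft : f t = v t := indicator_of_mem htmem v
  -- the average over shrinking balls tends to f t = v t
  have hδ : Tendsto (fun u : ℝ => |u - t| / 2) (𝓝[≠] t) (𝓝[>] (0:ℝ)) := by
    rw [tendsto_nhdsWithin_iff]
    constructor
    · have h0 : Tendsto (fun u : ℝ => |u - t| / 2) (𝓝 t) (𝓝 (|t - t| / 2)) :=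
        (((continuous_id.sub continuous_const).abs).div_const 2).tendsto t
      simpa using h0.mono_left nhdsWithin_le_nhds
    · filter_upwards [self_mem_nhdsWithin] with u hu
      have : u - t ≠ 0 := sub_ne_zero.mpr hu
      have := abs_pos.mpr this
      exact div_pos this (by norm_num)
  have hball : ∀ᶠ u in 𝓝[≠] t, t ∈ Metric.closedBall ((t + u) / 2) (1 * (|u - t| / 2)) := by
    apply Eventually.of_forall
    intro u
    rw [Metric.mem_closedBall, Real.dist_eq, one_mul]
    have : |t - (t + u) / 2| = |t - u| / 2 := by
      rw [show t - (t + u) / 2 = (t - u) / 2 by ring, abs_div]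
      norm_num
    rw [this, abs_sub_comm t u]
  have htend := ht (fun u : ℝ => (t + u) / 2) (fun u : ℝ => |u - t| / 2) hδ hball
  rw [hft] at htend
  -- identify averages with slopes
  have hmem : Ioo 0 T ∈ 𝓝 t := isOpen_Ioo.mem_nhds htIoo
  have heq : ∀ᶠ u in 𝓝[≠] t,
      (⨍ y in Metric.closedBall ((t + u) / 2) (|u - t| / 2), f y ∂(volume : Measure ℝ))
        = slope (fun u : ℝ => ∫ s in (0:ℝ)..u, v s) t u := by
    filter_upwards [self_mem_nhdsWithin, mem_nhdsWithin_of_mem_nhds hmem] with u hu huIoo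
    have hune : u ≠ t := hu
    have huIcc : u ∈ Icc 0 T := ⟨huIoo.1.le, huIoo.2.le⟩
    have htIcc : t ∈ Icc 0 T := ⟨htIoo.1.le, htIoo.2.le⟩
    rcases lt_or_gt_of_ne hune with hlt | hgt
    · -- u < t : ball = Icc u t
      have habs : |u - t| = t - u := by rw [abs_sub_comm]; exact abs_of_pos (by linarith)
      have hball' : Metric.closedBall ((t + u) / 2) (|u - t| / 2) = Icc u t := by
        rw [Real.closedBall_eq_Icc, habs]
        congr 1 <;> ring
      rw [hball', setAverage_eq]
      have hcong : ∫ y in Icc u t, f y ∂(volume : Measure ℝ) = ∫ y in Icc u t, v y := by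
        apply setIntegral_congr_fun measurableSet_Icc
        intro y hy
        exact indicator_of_mem
          (show y ∈ Ioc 0 T from ⟨lt_of_lt_of_le huIoo.1 hy.1, le_trans hy.2 htmem.2⟩) v
      rw [hcong, Real.volume_real_Icc_of_le (by linarith : u ≤ t)]
      rw [integral_Icc_eq_integral_Ioc]
      have hsl : slope (fun u : ℝ => ∫ s in (0:ℝ)..u, v s) t u
          = (u - t)⁻¹ • ((∫ s in (0:ℝ)..u, v s) - ∫ s in (0:ℝ)..t, v s) := rfl
      have hsub : (∫ s in (0:ℝ)..u, v s) - (∫ s in (0:ℝ)..t, v s)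
          = - ∫ s in u..t, v s := by
        have h := intervalIntegral.integral_interval_sub_left
          (hvsub (left_mem_Icc.mpr hT) htIcc) (hvsub (left_mem_Icc.mpr hT) huIcc)
        rw [← h]
        abel
      rw [hsl, hsub, intervalIntegral.integral_of_le hlt.le]
      rw [smul_neg, ← neg_smul, ← inv_neg, neg_sub]
    · -- t < u : ball = Icc t u
      have habs : |u - t| = u - t := abs_of_pos (by linarith)
      have hball' : Metric.closedBall ((t + u) / 2) (|u - t| / 2) = Icc t u := by
        rw [Real.closedBall_eq_Icc, habs]
        congr 1 <;> ring
      rw [hball', setAverage_eq]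
      have hcong : ∫ y in Icc t u, f y ∂(volume : Measure ℝ) = ∫ y in Icc t u, v y := by
        apply setIntegral_congr_fun measurableSet_Icc
        intro y hy
        exact indicator_of_mem
          (show y ∈ Ioc 0 T from ⟨lt_of_lt_of_le htIoo.1 hy.1, le_trans hy.2 huIcc.2⟩) v
      rw [hcong, Real.volume_real_Icc_of_le (by linarith : t ≤ u)]
      rw [integral_Icc_eq_integral_Ioc]
      have hsl : slope (fun u : ℝ => ∫ s in (0:ℝ)..u, v s) t u
          = (u - t)⁻¹ • ((∫ s in (0:ℝ)..u, v s) - ∫ s in (0:ℝ)..t, v s) := rfl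
      have hsub : (∫ s in (0:ℝ)..u, v s) - (∫ s in (0:ℝ)..t, v s)
          = ∫ s in t..u, v s := by
        rw [← intervalIntegral.integral_interval_sub_left
          (hvsub (left_mem_Icc.mpr hT) huIcc) (hvsub (left_mem_Icc.mpr hT) htIcc)]
      rw [hsl, hsub, intervalIntegral.integral_of_le hgt.le]
  rw [hasDerivAt_iff_tendsto_slope]
  exact htend.congr' heq

end AuxFTC


section AuxArc

variable {n : ℕ}

lemma ham_cont_p {F : En n → Set (En n)} {x : En n} (hne : (F x).Nonempty)
    (hcpt : IsCompact (F x)) {M : ℝ} (hM : ∀ v ∈ F x, ‖v‖ ≤ M) :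
    Continuous (fun q => Ham F x q) := by
  obtain ⟨v₀, hv₀⟩ := id hne
  have hM0 : 0 ≤ M := le_trans (norm_nonneg v₀) (hM v₀ hv₀)
  refine (LipschitzWith.of_dist_le_mul (K := ⟨M, hM0⟩) (f := fun q => Ham F x q)
    fun a b => ?_).continuous
  rw [Real.dist_eq, dist_eq_norm]
  rw [abs_sub_le_iff]
  constructor
  · exact ham_sub_le_p hne hcpt hM a b
  · have := ham_sub_le_p hne hcpt hM b a
    rwa [norm_sub_rev] at this

lemma arc_lipschitz {T : ℝ} (hT : 0 ≤ T) {y v : ℝ → En n} {C : ℝ} (hC : 0 ≤ C)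
    (hint : IntervalIntegrable v volume 0 T)
    (hrep : ∀ t ∈ Icc (0:ℝ) T, y t = y 0 + ∫ s in (0:ℝ)..t, v s)
    (hbd : ∀ᵐ s ∂(volume : Measure ℝ), s ∈ Icc (0:ℝ) T → ‖v s‖ ≤ C) :
    ∀ s ∈ Icc (0:ℝ) T, ∀ t ∈ Icc (0:ℝ) T, ‖y t - y s‖ ≤ C * |t - s| := by
  have haux : ∀ s ∈ Icc (0:ℝ) T, ∀ t ∈ Icc (0:ℝ) T, s ≤ t → ‖y t - y s‖ ≤ C * (t - s) := by
    intro s hs t ht hst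
    have hsub : ∀ {c d : ℝ}, c ∈ Icc (0:ℝ) T → d ∈ Icc (0:ℝ) T →
        IntervalIntegrable v volume c d := by
      intro c d hc hd
      apply hint.mono_set
      rw [uIcc_of_le hT]
      exact uIcc_subset_Icc hc hd
    have hdiff : y t - y s = ∫ u in s..t, v u := by
      rw [hrep t ht, hrep s hs]
      have h := intervalIntegral.integral_interval_sub_left
        (hsub (left_mem_Icc.mpr hT) ht) (hsub (left_mem_Icc.mpr hT) hs)
      rw [← h]
      abel
    rw [hdiff]
    have hae : ∀ᵐ u ∂(volume : Measure ℝ).restrict (Set.uIoc s t), ‖v u‖ ≤ (fun _ => C) u := by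
      have h1 : ∀ᵐ u ∂(volume : Measure ℝ).restrict (Set.uIoc s t), u ∈ Set.uIoc s t :=
        ae_restrict_mem measurableSet_uIoc
      filter_upwards [ae_restrict_of_ae hbd, h1] with u h2 h3
      apply h2
      rw [uIoc_of_le hst] at h3
      exact ⟨le_trans hs.1 h3.1.le, le_trans h3.2 ht.2⟩
    have := intervalIntegral.norm_integral_le_abs_of_norm_le hae
      (intervalIntegrable_const (c := C))
    calc ‖∫ u in s..t, v u‖ ≤ |∫ _ in s..t, C| := this
      _ = C * (t - s) := by
          rw [intervalIntegral.integral_const, smul_eq_mul,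
            abs_of_nonneg (mul_nonneg (by linarith) hC)]
          ring
  intro s hs t ht
  rcases le_total s t with h | h
  · rw [abs_of_nonneg (by linarith)]
    exact haux s hs t ht h
  · rw [abs_of_nonpos (by linarith), norm_sub_rev]
    have := haux t ht s hs h
    calc ‖y s - y t‖ ≤ C * (s - t) := this
      _ = C * -(t - s) := by ring

lemma arc_continuousOn {T : ℝ} (hT : 0 ≤ T) {y v : ℝ → En n}
    (hint : IntervalIntegrable v volume 0 T)
    (hrep : ∀ t ∈ Icc (0:ℝ) T, y t = y 0 + ∫ s in (0:ℝ)..t, v s) :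
    ContinuousOn y (Icc (0:ℝ) T) := by
  have h1 : ContinuousOn (fun t => y 0 + ∫ s in (0:ℝ)..t, v s) (Icc (0:ℝ) T) := by
    apply continuousOn_const.add
    have := intervalIntegral.continuousOn_primitive_interval' hint (a := 0) (by rw [uIcc_of_le hT]; exact left_mem_Icc.mpr hT)
    rwa [uIcc_of_le hT] at this
  exact h1.congr hrep

end AuxArc

set_option maxHeartbeats 2000000 in
/-- Under (F) and (H), along an optimal trajectory `x(·)` from `x ∉ 𝒮`
with unit proximal inner normal `ξ` at `x̄ = x(T(x))` satisfying `H(x̄,ξ) = 0`, any dual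
arc `p` solving the Hamiltonian inclusion with `p(T(x)) = ξ` satisfies
`H(x(t),p(t)) = 0` for all `t ∈ [0,T(x)]`. -/
theorem hamiltonian_constant_zero {n : ℕ} (F : En n → Set (En n)) (K c₀ K₁ : ℝ)
    (gradp : En n → En n → En n) (hF : HypF F K) (hH : HypH F gradp c₀ K₁)
    (S : Set (En n)) (hScl : IsClosed S)
    (x : En n) (hxS : x ∉ S) (xtraj : ℝ → En n) (Tx : ℝ)
    (hopt : OptimalTraj F S x xtraj Tx)
    (ξ : En n) (hξunit : ‖ξ‖ = 1)
    (hξnor : ξ ∈ proxNormal (closure Sᶜ) (xtraj Tx))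
    (hH0 : Ham F (xtraj Tx) ξ = 0)
    (p : ℝ → En n)
    (hxeq : IsACWith xtraj 0 Tx (fun s v => v = gradp (xtraj s) (p s)))
    (hpeq : IsACWith p 0 Tx (fun s v => -v ∈ clarkeGradAt (fun z => Ham F z (p s)) (xtraj s)))
    (hterm : p Tx = ξ) :
    ∀ t ∈ Icc (0 : ℝ) Tx, Ham F (xtraj t) (p t) = 0 := by
  obtain ⟨hTx0, hTraj, hx0, hxT, hmin⟩ := hopt
  obtain ⟨w, hw_int, hw_ae, hw_rep⟩ := hTraj
  obtain ⟨vx, hvx_int, hvx_ae, hvx_rep⟩ := hxeq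
  obtain ⟨vp, hvp_int, hvp_ae, hvp_rep⟩ := hpeq
  have hTmem : Tx ∈ Icc (0:ℝ) Tx := right_mem_Icc.mpr hTx0
  have hK0 : 0 < K := hF.1
  have hFne : ∀ z : En n, (F z).Nonempty := fun z => (hF.2.1 z).1
  have hFcpt : ∀ z : En n, IsCompact (F z) := fun z => (hF.2.1 z).2.2
  set hfun : ℝ → ℝ := fun t => Ham F (xtraj t) (p t) with hhfun
  have hx_int : IntervalIntegrable vx volume 0 Tx := hvx_int Tx hTmem
  have hp_int : IntervalIntegrable vp volume 0 Tx := hvp_int Tx hTmem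
  have hw_int' : IntervalIntegrable w volume 0 Tx := hw_int Tx hTmem
  have hxcont : ContinuousOn xtraj (Icc 0 Tx) := arc_continuousOn hTx0 hw_int' hw_rep
  have hpcont : ContinuousOn p (Icc 0 Tx) := arc_continuousOn hTx0 hp_int hvp_rep
  -- sup bounds for p and xtraj
  obtain ⟨tp, htpIcc, htpmax⟩ := isCompact_Icc.exists_isMaxOn (nonempty_Icc.mpr hTx0)
    hpcont.norm
  set Bp := ‖p tp‖ with hBp
  have hBp0 : 0 ≤ Bp := norm_nonneg _
  have hBple : ∀ t ∈ Icc (0:ℝ) Tx, ‖p t‖ ≤ Bp := fun t ht => htpmax ht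
  obtain ⟨tx, htxIcc, htxmax⟩ := isCompact_Icc.exists_isMaxOn (nonempty_Icc.mpr hTx0)
    hxcont.norm
  set Bx := ‖xtraj tx‖ with hBx
  have hBxle : ∀ t ∈ Icc (0:ℝ) Tx, ‖xtraj t‖ ≤ Bx := fun t ht => htxmax ht
  -- bound for F along the trajectory
  obtain ⟨v₀, hv₀Fx, hv₀max⟩ := (hFcpt (xtraj Tx)).exists_isMaxOn (hFne _)
    continuous_norm.continuousOn
  set M₀ := ‖v₀‖ with hM₀
  have hM₀0 : 0 ≤ M₀ := norm_nonneg _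
  set Mx := M₀ + K * (‖xtraj Tx‖ + Bx) with hMx
  have hMx0 : 0 ≤ Mx := by
    have h1 : 0 ≤ ‖xtraj Tx‖ + Bx := by positivity
    have := mul_nonneg hK0.le h1
    linarith
  have hMFtraj : ∀ t ∈ Icc (0:ℝ) Tx, ∀ v ∈ F (xtraj t), ‖v‖ ≤ Mx := by
    intro t ht v hv
    obtain ⟨v', hv', hle⟩ := hF.2.2 (xtraj Tx) (xtraj t) v hv
    have h1 : ‖v‖ ≤ ‖v'‖ + ‖v - v'‖ := by
      calc ‖v‖ = ‖v' + (v - v')‖ := by congr 1; abel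
        _ ≤ ‖v'‖ + ‖v - v'‖ := norm_add_le _ _
    have h2 : ‖v'‖ ≤ M₀ := hv₀max hv'
    have h3 : ‖xtraj Tx - xtraj t‖ ≤ ‖xtraj Tx‖ + ‖xtraj t‖ := norm_sub_le _ _
    have h4 : ‖xtraj t‖ ≤ Bx := hBxle t ht
    have h5 : K * ‖xtraj Tx - xtraj t‖ ≤ K * (‖xtraj Tx‖ + Bx) :=
      mul_le_mul_of_nonneg_left (by linarith) hK0.le
    linarith
  -- Lipschitz of xtraj
  have hw_bd : ∀ᵐ s ∂(volume : Measure ℝ), s ∈ Icc (0:ℝ) Tx → ‖w s‖ ≤ Mx := by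
    filter_upwards [hw_ae] with s hws hs
    exact hMFtraj s hs (w s) (hws hs)
  have hxlip := arc_lipschitz hTx0 hMx0 hw_int' hw_rep hw_bd
  -- Lipschitz of p
  set Lp := K * Bp with hLp
  have hLp0 : 0 ≤ Lp := mul_nonneg hK0.le hBp0
  have hvp_bd : ∀ᵐ s ∂(volume : Measure ℝ), s ∈ Icc (0:ℝ) Tx → ‖vp s‖ ≤ Lp := by
    filter_upwards [hvp_ae] with s hvs hs
    have hvs' : -vp s ∈ clarkeGradAt (fun z => Ham F z (p s)) (xtraj s) := hvs hs
    have hcl := (clarke_props hF hH (p s) (xtraj s) hvs').2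
    rw [norm_neg] at hcl
    calc ‖vp s‖ ≤ K * ‖p s‖ := hcl
      _ ≤ K * Bp := mul_le_mul_of_nonneg_left (hBple s hs) hK0.le
  have hplip := arc_lipschitz hTx0 hLp0 hp_int hvp_rep hvp_bd
  -- Lipschitz of hfun on Icc
  set Lh := K * Bp * Mx + Mx * Lp with hLh
  have hLh0 : 0 ≤ Lh :=
    add_nonneg (mul_nonneg (mul_nonneg hK0.le hBp0) hMx0) (mul_nonneg hMx0 hLp0)
  have hflip : ∀ s ∈ Icc (0:ℝ) Tx, ∀ t ∈ Icc (0:ℝ) Tx, |hfun t - hfun s| ≤ Lh * |t - s| := by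
    intro s hs t ht
    have h1 : |Ham F (xtraj t) (p t) - Ham F (xtraj s) (p t)|
        ≤ K * ‖p t‖ * ‖xtraj t - xtraj s‖ := ham_abs_sub_x hF (p t) _ _
    have h2 : |Ham F (xtraj s) (p t) - Ham F (xtraj s) (p s)| ≤ Mx * ‖p t - p s‖ := by
      rw [abs_sub_le_iff]
      constructor
      · exact ham_sub_le_p (hFne _) (hFcpt _) (fun v hv => hMFtraj s hs v hv) (p t) (p s)
      · have := ham_sub_le_p (hFne _) (hFcpt _) (fun v hv => hMFtraj s hs v hv) (p s) (p t)
        rwa [norm_sub_rev] at this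
    have h3 := hxlip s hs t ht
    have h4 := hplip s hs t ht
    have h5 : ‖p t‖ ≤ Bp := hBple t ht
    have h6 : |hfun t - hfun s| ≤ |Ham F (xtraj t) (p t) - Ham F (xtraj s) (p t)|
        + |Ham F (xtraj s) (p t) - Ham F (xtraj s) (p s)| := by
      rw [hhfun]
      exact abs_sub_le _ _ _
    have h7 : K * ‖p t‖ * ‖xtraj t - xtraj s‖ ≤ K * Bp * (Mx * |t - s|) := by
      have hx1 : ‖xtraj t - xtraj s‖ ≤ Mx * |t - s| := h3
      have h5' : K * ‖p t‖ ≤ K * Bp := mul_le_mul_of_nonneg_left h5 hK0.le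
      exact mul_le_mul h5' hx1 (norm_nonneg _) (by positivity)
    have h8 : Mx * ‖p t - p s‖ ≤ Mx * (Lp * |t - s|) :=
      mul_le_mul_of_nonneg_left h4 hMx0
    calc |hfun t - hfun s| ≤ _ + _ := h6
      _ ≤ K * Bp * (Mx * |t - s|) + Mx * (Lp * |t - s|) := by linarith
      _ = Lh * |t - s| := by rw [hLh]; ring
  -- global Lipschitz extension
  set proj : ℝ → ℝ := fun t => max 0 (min t Tx) with hproj
  have hprojIcc : ∀ t, proj t ∈ Icc (0:ℝ) Tx :=
    fun t => ⟨le_max_left _ _, max_le hTx0 (min_le_right _ _)⟩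
  have hprojeq : ∀ t ∈ Icc (0:ℝ) Tx, proj t = t := by
    intro t ht
    rw [hproj]
    simp only
    rw [min_eq_left ht.2, max_eq_right ht.1]
  have hprojlip : ∀ a b : ℝ, |proj a - proj b| ≤ |a - b| := by
    intro a b
    have h1 : |proj a - proj b| ≤ |min a Tx - min b Tx| := by
      rw [hproj]
      simp only
      rw [max_comm 0 (min a Tx), max_comm 0 (min b Tx)]
      exact abs_max_sub_max_le_abs _ _ _
    have h2 : |min a Tx - min b Tx| ≤ max |a - b| |Tx - Tx| := abs_min_sub_min_le_max _ _ _ _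
    simp only [sub_self, abs_zero] at h2
    rw [max_eq_left (abs_nonneg _)] at h2
    linarith
  set htil : ℝ → ℝ := fun t => hfun (proj t) with hhtil
  have htil_eq : ∀ t ∈ Icc (0:ℝ) Tx, htil t = hfun t := by
    intro t ht
    rw [hhtil]
    simp only
    rw [hprojeq t ht]
  set LhN : NNReal := ⟨Lh, hLh0⟩ with hLhN
  have htil_lip : LipschitzWith LhN htil := by
    apply LipschitzWith.of_dist_le_mul
    intro a b
    rw [Real.dist_eq, Real.dist_eq]
    calc |htil a - htil b| ≤ Lh * |proj a - proj b| :=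
          hflip (proj b) (hprojIcc b) (proj a) (hprojIcc a)
      _ ≤ Lh * |a - b| := mul_le_mul_of_nonneg_left (hprojlip a b) hLh0
  have htil_cont : Continuous htil := htil_lip.continuous
  -- at a.e. good point with p t ≠ 0, the derivative of htil vanishes
  have hgood : ∀ᵐ t ∂(volume : Measure ℝ), t ∈ Ioo 0 Tx → p t ≠ 0 → HasDerivAt htil 0 t := by
    filter_upwards [ae_hasDerivAt_primitive hTx0 hx_int, ae_hasDerivAt_primitive hTx0 hp_int,
      hvx_ae, hvp_ae, htil_lip.ae_differentiableAt_real] with t hdx hdp hvxt hvpt hdiff htIoo hpt0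
    have htIcc : t ∈ Icc (0:ℝ) Tx := ⟨htIoo.1.le, htIoo.2.le⟩
    have hvxteq : vx t = gradp (xtraj t) (p t) := hvxt htIcc
    have hvptmem : -vp t ∈ clarkeGradAt (fun z => Ham F z (p t)) (xtraj t) := hvpt htIcc
    have hmemIoo : Ioo (0:ℝ) Tx ∈ 𝓝 t := isOpen_Ioo.mem_nhds htIoo
    have hx_hd : HasDerivAt xtraj (vx t) t := by
      have h2 : HasDerivAt (fun u => xtraj 0 + ∫ s in (0:ℝ)..u, vx s) (vx t) t :=
        (hdx htIoo).const_add (xtraj 0)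
      apply h2.congr_of_eventuallyEq
      filter_upwards [hmemIoo] with u hu
      exact hvx_rep u ⟨hu.1.le, hu.2.le⟩
    have hp_hd : HasDerivAt p (vp t) t := by
      have h2 : HasDerivAt (fun u => p 0 + ∫ s in (0:ℝ)..u, vp s) (vp t) t :=
        (hdp htIoo).const_add (p 0)
      apply h2.congr_of_eventuallyEq
      filter_upwards [hmemIoo] with u hu
      exact hvp_rep u ⟨hu.1.le, hu.2.le⟩
    obtain ⟨hsupp, -⟩ := clarke_props hF hH (p t) (xtraj t) hvptmem
    set A : ℝ := K₁ * (Mx * Lp) + c₀ * Bp * (Mx * Mx) with hA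
    set Ψ : ℝ → ℝ := fun u => (inner ℝ (vx t) (p u - p t) : ℝ)
      - (inner ℝ (vp t) (xtraj u - xtraj t) : ℝ) - A * (u - t) ^ 2 with hΨ
    have key : ∀ u ∈ Icc (0:ℝ) Tx, hfun t + Ψ u ≤ hfun u := by
      intro u hu
      have ha := hsupp (xtraj u)
      have hgc : HasGradientAt (fun q => Ham F (xtraj u) q) (gradp (xtraj u) (p t)) (p t) :=
        hH.2.2.2.1 (xtraj u) (p t) hpt0
      have hcont_p : Continuous (fun q => Ham F (xtraj u) q) :=
        ham_cont_p (hFne _) (hFcpt _) (fun v hv => hMFtraj u hu v hv)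
      have hb := midpoint_support hcont_p
        (fun a b => ham_midpoint_p (hFne _) (hFcpt _) a b) hgc (p u)
      have hgl := hH.2.2.2.2 (p t) hpt0 (xtraj u) (xtraj t)
      have hc : |(inner ℝ (gradp (xtraj u) (p t) - gradp (xtraj t) (p t)) (p u - p t) : ℝ)|
          ≤ K₁ * ‖xtraj u - xtraj t‖ * ‖p u - p t‖ := by
        calc |(inner ℝ (gradp (xtraj u) (p t) - gradp (xtraj t) (p t)) (p u - p t) : ℝ)|
            ≤ ‖gradp (xtraj u) (p t) - gradp (xtraj t) (p t)‖ * ‖p u - p t‖ :=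
              abs_real_inner_le_norm _ _
          _ ≤ (K₁ * ‖xtraj u - xtraj t‖) * ‖p u - p t‖ :=
              mul_le_mul_of_nonneg_right hgl (norm_nonneg _)
          _ = K₁ * ‖xtraj u - xtraj t‖ * ‖p u - p t‖ := by ring
      have hdx' := hxlip t htIcc u hu
      have hdp' := hplip t htIcc u hu
      have hptB : ‖p t‖ ≤ Bp := hBple t htIcc
      have hsplit : (inner ℝ (gradp (xtraj u) (p t)) (p u - p t) : ℝ)
          = (inner ℝ (gradp (xtraj u) (p t) - gradp (xtraj t) (p t)) (p u - p t) : ℝ)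
            + (inner ℝ (gradp (xtraj t) (p t)) (p u - p t) : ℝ) := by
        rw [← inner_add_left, sub_add_cancel]
      have hneg : (inner ℝ (-vp t) (xtraj u - xtraj t) : ℝ)
          = -(inner ℝ (vp t) (xtraj u - xtraj t) : ℝ) := inner_neg_left _ _
      -- quadratic error bounds
      have herr1 : K₁ * ‖xtraj u - xtraj t‖ * ‖p u - p t‖ ≤ K₁ * (Mx * Lp) * (u - t) ^ 2 := by
        have hprod : ‖xtraj u - xtraj t‖ * ‖p u - p t‖ ≤ (Mx * Lp) * (u - t) ^ 2 := by
          have := mul_le_mul hdx' hdp' (norm_nonneg _) (by positivity)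
          calc ‖xtraj u - xtraj t‖ * ‖p u - p t‖ ≤ Mx * |u - t| * (Lp * |u - t|) := this
            _ = (Mx * Lp) * |u - t| ^ 2 := by ring
            _ = (Mx * Lp) * (u - t) ^ 2 := by rw [sq_abs]
        calc K₁ * ‖xtraj u - xtraj t‖ * ‖p u - p t‖
            = K₁ * (‖xtraj u - xtraj t‖ * ‖p u - p t‖) := by ring
          _ ≤ K₁ * ((Mx * Lp) * (u - t) ^ 2) := mul_le_mul_of_nonneg_left hprod hH.2.1
          _ = K₁ * (Mx * Lp) * (u - t) ^ 2 := by ring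
      have herr2 : c₀ * ‖p t‖ * ‖xtraj u - xtraj t‖ ^ 2
          ≤ c₀ * Bp * (Mx * Mx) * (u - t) ^ 2 := by
        have hsq : ‖xtraj u - xtraj t‖ ^ 2 ≤ (Mx * Mx) * (u - t) ^ 2 := by
          have := mul_le_mul hdx' hdx' (norm_nonneg _) (by positivity)
          calc ‖xtraj u - xtraj t‖ ^ 2 = ‖xtraj u - xtraj t‖ * ‖xtraj u - xtraj t‖ := sq _
            _ ≤ Mx * |u - t| * (Mx * |u - t|) := this
            _ = (Mx * Mx) * |u - t| ^ 2 := by ring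
            _ = (Mx * Mx) * (u - t) ^ 2 := by rw [sq_abs]
        have h1 : c₀ * ‖p t‖ * ‖xtraj u - xtraj t‖ ^ 2 ≤ c₀ * Bp * ‖xtraj u - xtraj t‖ ^ 2 := by
          have := mul_le_mul_of_nonneg_left hptB hH.1
          nlinarith [sq_nonneg ‖xtraj u - xtraj t‖]
        have h2 : c₀ * Bp * ‖xtraj u - xtraj t‖ ^ 2 ≤ c₀ * Bp * ((Mx * Mx) * (u - t) ^ 2) :=
          mul_le_mul_of_nonneg_left hsq (mul_nonneg hH.1 hBp0)
        calc c₀ * ‖p t‖ * ‖xtraj u - xtraj t‖ ^ 2 ≤ c₀ * Bp * ((Mx * Mx) * (u - t) ^ 2) := by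
              linarith
          _ = c₀ * Bp * (Mx * Mx) * (u - t) ^ 2 := by ring
      -- combine everything
      have hc' := (abs_le.mp hc).1
      rw [← hvxteq] at hc'
      rw [hneg] at ha
      rw [hsplit, ← hvxteq] at hb
      show hfun t + ((inner ℝ (vx t) (p u - p t) : ℝ)
        - (inner ℝ (vp t) (xtraj u - xtraj t) : ℝ) - A * (u - t) ^ 2) ≤ hfun u
      rw [hA]
      have hft : hfun t = Ham F (xtraj t) (p t) := rfl
      have hfu : hfun u = Ham F (xtraj u) (p u) := rfl
      rw [hft, hfu]
      linarith
    have hloc : IsLocalMin (fun u => htil u - Ψ u) t := by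
      have hΨt : Ψ t = 0 := by
        rw [hΨ]
        simp
      filter_upwards [hmemIoo] with u hu
      have h1 := key u ⟨hu.1.le, hu.2.le⟩
      show htil t - Ψ t ≤ htil u - Ψ u
      rw [htil_eq u ⟨hu.1.le, hu.2.le⟩, htil_eq t htIcc, hΨt]
      linarith
    have c1 : HasDerivAt (fun u => (inner ℝ (vx t) (p u - p t) : ℝ))
        ((inner ℝ (vx t) (vp t) : ℝ)) t := by
      have hp' : HasDerivAt (fun u => p u - p t) (vp t) t := hp_hd.sub_const (p t)
      have hconst : HasDerivAt (fun _ : ℝ => vx t) 0 t := hasDerivAt_const t (vx t)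
      have := HasDerivAt.inner ℝ hconst hp'
      simpa using this
    have c2 : HasDerivAt (fun u => (inner ℝ (vp t) (xtraj u - xtraj t) : ℝ))
        ((inner ℝ (vp t) (vx t) : ℝ)) t := by
      have hx' : HasDerivAt (fun u => xtraj u - xtraj t) (vx t) t := hx_hd.sub_const (xtraj t)
      have hconst : HasDerivAt (fun _ : ℝ => vp t) 0 t := hasDerivAt_const t (vp t)
      have := HasDerivAt.inner ℝ hconst hx'
      simpa using this
    have c3 : HasDerivAt (fun u : ℝ => A * (u - t) ^ 2) 0 t := by
      have h1 : HasDerivAt (fun u : ℝ => u - t) 1 t := (hasDerivAt_id t).sub_const t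
      have h3 := (h1.pow 2).const_mul A
      simpa using h3
    have hΨd : HasDerivAt Ψ 0 t := by
      have h := (c1.sub c2).sub c3
      have hval : (inner ℝ (vx t) (vp t) : ℝ) - (inner ℝ (vp t) (vx t) : ℝ) - 0 = 0 := by
        rw [real_inner_comm (vp t) (vx t)]
        ring
      rw [hval] at h
      exact h
    have hsub : HasDerivAt (fun u => htil u - Ψ u) (deriv htil t - 0) t :=
      hdiff.hasDerivAt.sub hΨd
    have h0 := hloc.deriv_eq_zero
    rw [hsub.deriv] at h0
    have hfinal : deriv htil t = 0 := by linarith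
    have hlast := hdiff.hasDerivAt
    rwa [hfinal] at hlast
  -- conclusion
  intro t₀ ht₀
  by_contra hne0
  have hfT : hfun Tx = 0 := by
    show Ham F (xtraj Tx) (p Tx) = 0
    rw [hterm]
    exact hH0
  have htilT : htil Tx = 0 := by rw [htil_eq Tx hTmem]; exact hfT
  have htil_t₀ : htil t₀ ≠ 0 := by rw [htil_eq t₀ ht₀]; exact hne0
  have ht₀T : t₀ ≠ Tx := fun h => htil_t₀ (by rw [h]; exact htilT)
  have ht₀lt : t₀ < Tx := lt_of_le_of_ne ht₀.2 ht₀T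
  set A' : Set ℝ := Icc t₀ Tx ∩ htil ⁻¹' {0} with hA'
  have hA'ne : A'.Nonempty := ⟨Tx, ⟨ht₀lt.le, le_refl Tx⟩, htilT⟩
  have hA'closed : IsClosed A' := isClosed_Icc.inter (isClosed_singleton.preimage htil_cont)
  have hA'bdd : BddBelow A' := ⟨t₀, fun u hu => hu.1.1⟩
  set b := sInf A' with hb
  have hbA : b ∈ A' := hA'closed.csInf_mem hA'ne hA'bdd
  have hbt₀ : t₀ ≤ b := hbA.1.1
  have hbzero : htil b = 0 := hbA.2
  have hbne : t₀ ≠ b := fun h => htil_t₀ (by rw [h]; exact hbzero)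
  have hbgt : t₀ < b := lt_of_le_of_ne hbt₀ hbne
  have hnozero : ∀ u, t₀ ≤ u → u < b → htil u ≠ 0 := by
    intro u h1 h2 h0
    have hmem : u ∈ A' := ⟨⟨h1, le_trans h2.le hbA.1.2⟩, h0⟩
    have := csInf_le hA'bdd hmem
    linarith
  have hae0 : ∀ᵐ u ∂(volume : Measure ℝ), u ∈ Ioo t₀ b → HasDerivAt htil 0 u := by
    filter_upwards [hgood] with u hu huIoo
    have huIoo' : u ∈ Ioo (0:ℝ) Tx :=
      ⟨lt_of_le_of_lt ht₀.1 huIoo.1, lt_of_lt_of_le huIoo.2 hbA.1.2⟩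
    apply hu huIoo'
    intro hp0
    have hz : hfun u = 0 := by
      show Ham F (xtraj u) (p u) = 0
      rw [hp0]
      exact ham_zero (hFne _) (hFcpt _)
    have hz' : htil u = 0 := by rw [htil_eq u ⟨huIoo'.1.le, huIoo'.2.le⟩]; exact hz
    exact hnozero u huIoo.1.le huIoo.2 hz'
  have hconst := lipschitz_deriv_zero_const htil_lip hbgt.le hae0
  rw [hbzero] at hconst
  exact htil_t₀ hconst.symm
end

section
/- Let g ∈ C²_b(ℝⁿ) with ∇g ≠ 0 on ∂𝒮, where 𝒮 = {x ∈ ℝⁿ : g(x) ≤ 0}, and let Σ be a subset of ∂𝒮. Let F satisfy hypothesis (F) with 0 ∈ F(x) for every x ∈ ∂𝒮, let H(x,p) = sup_{v∈F(x)} ⟨p,v⟩ be of class C^{1,1} on ℝⁿ×(ℝⁿ∖{0}), and suppose that for all x ∈ ∂𝒮∖Σ and all λ ∈ ℝ one has ∇_x H(x, −∇g(x)) − ∇_p H(x, −∇g(x))·∇²g(x) ≠ λ∇g(x). Then: if for some x̄ ∈ ∂𝒮 there exists a nonzero vector ξ ∈ N^P_{cl(ℝⁿ∖𝒮)}(x̄)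 with H(x̄, ξ) = 0, then x̄ ∈ Σ. -/
open Set MeasureTheory Filter Topology Metric
open scoped ENNReal Pointwise

open scoped Gradient

noncomputable section
section Aux

open InnerProductSpace
open scoped Pointwise

variable {n : ℕ}

lemma Ham_nonneg {F : En n → Set (En n)} {x : En n} (hc : IsCompact (F x))
    (h0 : (0 : En n) ∈ F x) (p : En n) : 0 ≤ Ham F x p := by
  have hb : BddAbove ((fun v => (inner ℝ p v : ℝ)) '' F x) :=
    (hc.image (continuous_const.inner continuous_id)).bddAbove
  exact le_csSup hb ⟨0, h0, by simp⟩

lemma Ham_smul {F : En n → Set (En n)} {x : En n} {t : ℝ} (ht : 0 ≤ t) (p : En n) :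
    Ham F x (t • p) = t * Ham F x p := by
  unfold Ham
  have h1 : (fun v => (inner ℝ (t • p) v : ℝ)) '' F x
      = t • ((fun v => (inner ℝ p v : ℝ)) '' F x) := by
    rw [← Set.image_smul, Set.image_image]
    simp only [smul_eq_mul, real_inner_smul_left]
  rw [h1, Real.sSup_smul_of_nonneg ht, smul_eq_mul]

lemma eventually_pos_ray {g : En n → ℝ} {x w : En n} {G : En n →L[ℝ] ℝ}
    (hG : HasFDerivAt g G x) (hx0 : g x = 0) (hw : 0 < G w) :
    ∀ᶠ t in 𝓝[>] (0:ℝ), 0 < g (x + t • w) := by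
  have hline : HasDerivAt (fun t : ℝ => x + t • w) w 0 := by
    simpa using ((hasDerivAt_id (0:ℝ)).smul_const w).const_add x
  have hG' : HasFDerivAt g G (x + (0:ℝ) • w) := by simpa using hG
  have h : HasDerivAt (fun t : ℝ => g (x + t • w)) (G w) 0 := hG'.comp_hasDerivAt 0 hline
  have hslope := hasDerivAt_iff_tendsto_slope.mp h
  have h1 : ∀ᶠ t in 𝓝[≠] (0:ℝ), 0 < slope (fun t : ℝ => g (x + t • w)) 0 t :=
    hslope.eventually (lt_mem_nhds hw)
  have h2 : ∀ᶠ t in 𝓝[>] (0:ℝ), 0 < slope (fun t : ℝ => g (x + t • w)) 0 t :=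
    h1.filter_mono (nhdsWithin_mono _ (fun t ht => ne_of_gt ht))
  filter_upwards [h2, self_mem_nhdsWithin] with t hst ht
  have ht0 : (0:ℝ) < t := ht
  have hsl : slope (fun t : ℝ => g (x + t • w)) 0 t = g (x + t • w) / t := by
    simp [slope_def_field, hx0]
  rw [hsl] at hst
  have := mul_pos hst ht0
  rwa [div_mul_cancel₀ _ (ne_of_gt ht0)] at this

lemma mem_closure_ray {A : Set (En n)} {x w : En n}
    (h : ∀ᶠ t in 𝓝[>] (0:ℝ), x + t • w ∈ A) : x ∈ closure A := by
  have hc : Continuous fun t : ℝ => x + t • w := by continuity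
  have htend : Tendsto (fun t : ℝ => x + t • w) (𝓝[>] (0:ℝ)) (𝓝 x) := by
    simpa using (hc.tendsto 0).mono_left nhdsWithin_le_nhds
  exact mem_closure_of_tendsto htend h

lemma toDual_norm_sub (a b : En n) :
    ‖(toDual ℝ (En n) a : StrongDual ℝ (En n)) - toDual ℝ (En n) b‖ = ‖a - b‖ := by
  rw [← map_sub]
  exact (toDual ℝ (En n)).norm_map _

end Aux

end

set_option maxHeartbeats 4000000 in
/-- Let `g ∈ C²_b(ℝⁿ)` with `∇g ≠ 0` on `∂𝒮`, `𝒮 = {g ≤ 0}`, `Σ ⊆ ∂𝒮`.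
Let `F` satisfy (F) with `0 ∈ F(x)` on `∂𝒮`, let `H` be `C^{1,1}` on `ℝⁿ×(ℝⁿ∖{0})`
(gradients `gradx`, `gradp`), and assume that for all `x ∈ ∂𝒮∖Σ` and `λ ∈ ℝ`,
`∇ₓH(x,−∇g(x)) − ∇ₚH(x,−∇g(x))·∇²g(x) ≠ λ∇g(x)`. Then: if `x̄ ∈ ∂𝒮` admits a nonzero
proximal normal `ξ` to `cl(ℝⁿ∖𝒮)` with `H(x̄,ξ) = 0`, then `x̄ ∈ Σ`. -/
theorem vanishing_hamiltonian_normal_in_sigma {n : ℕ}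
    (F : En n → Set (En n)) (K : ℝ) (hF : HypF F K)
    (gradp gradx : En n → En n → En n)
    (g : En n → ℝ) (hg2 : ContDiff ℝ 2 g)
    (hgb : ∃ C : ℝ, ∀ x : En n, ‖iteratedFDeriv ℝ 2 g x‖ ≤ C)
    (S : Set (En n)) (hgS : S = {x : En n | g x ≤ 0})
    (Sg : Set (En n)) (hSg : Sg ⊆ frontier S)
    (hgne : ∀ x ∈ frontier S, ∇ g x ≠ 0)
    (h0F : ∀ x ∈ frontier S, (0 : En n) ∈ F x)
    -- `H` is of class `C^{1,1}` on `ℝⁿ × (ℝⁿ ∖ {0})`: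
    (hgradp : ∀ x p : En n, p ≠ 0 → HasGradientAt (fun q => Ham F x q) (gradp x p) p)
    (hgradx : ∀ x p : En n, p ≠ 0 → HasGradientAt (fun y => Ham F y p) (gradx x p) x)
    (hC11 : ∀ Kc : Set (En n × En n), IsCompact Kc → (∀ q ∈ Kc, q.2 ≠ 0) →
      ∃ L : ℝ, ∀ a ∈ Kc, ∀ b ∈ Kc,
        ‖gradx a.1 a.2 - gradx b.1 b.2‖ + ‖gradp a.1 a.2 - gradp b.1 b.2‖
          ≤ L * (‖a.1 - b.1‖ + ‖a.2 - b.2‖))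
    -- condition (d):
    (hd : ∀ x ∈ frontier S \ Sg, ∀ l : ℝ,
      gradx x (-(∇ g x)) - fderiv ℝ (fun y => ∇ g y) x (gradp x (-(∇ g x)))
        ≠ l • ∇ g x) :
    ∀ xb ∈ frontier S, ∀ ξ : En n, ξ ≠ 0 →
      ξ ∈ proxNormal (closure Sᶜ) xb → Ham F xb ξ = 0 → xb ∈ Sg := by
  classical
  intro xb hxb ξ hξ hprox hH0
  by_contra hnot
  have hxbn : xb ∈ frontier S \ Sg := ⟨hxb, hnot⟩
  set u : En n := ∇ g xb with hu_def
  have hu : u ≠ 0 := hgne xb hxb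
  have hgc : Continuous g := hg2.continuous
  have hScl : IsClosed S := by rw [hgS]; exact isClosed_le hgc continuous_const
  have hgdiff : Differentiable ℝ g := hg2.differentiable (by norm_num)
  have hgradg : HasFDerivAt g (InnerProductSpace.toDual ℝ (En n) u) xb :=
    hasGradientAt_iff_hasFDerivAt.mp (hgdiff xb).hasGradientAt
  -- g xb = 0
  have hxbS : g xb ≤ 0 := by
    have := hScl.frontier_subset hxb; rwa [hgS] at this
  have hclc : xb ∈ closure Sᶜ := by
    have : xb ∈ frontier Sᶜ := by rwa [frontier_compl]
    exact frontier_subset_closure this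
  have hg0 : g xb = 0 := by
    have hle : closure Sᶜ ⊆ {x : En n | 0 ≤ g x} := by
      apply closure_minimal _ (isClosed_le continuous_const hgc)
      intro x hx
      rw [hgS] at hx
      simp only [Set.mem_compl_iff, Set.mem_setOf_eq, not_le] at hx
      exact le_of_lt hx
    exact le_antisymm hxbS (hle hclc)
  -- Step A: ξ = t • (-u) with t > 0
  have key : ∀ w : En n, 0 < (inner ℝ u w : ℝ) → (inner ℝ ξ w : ℝ) ≤ 0 := by
    intro w hw
    have hpos : ∀ᶠ t in 𝓝[>] (0:ℝ), 0 < g (xb + t • w) :=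
      eventually_pos_ray hgradg hg0 (by simpa [InnerProductSpace.toDual_apply_apply] using hw)
    obtain ⟨σ, hσ0, hσ⟩ := hprox
    have hev : ∀ᶠ t in 𝓝[>] (0:ℝ), (inner ℝ ξ w : ℝ) ≤ σ * t * ‖w‖ ^ 2 := by
      filter_upwards [hpos, self_mem_nhdsWithin] with t hgt ht
      have ht0 : (0:ℝ) < t := ht
      have hmem : xb + t • w ∈ closure Sᶜ := by
        apply subset_closure
        rw [hgS]
        simp only [Set.mem_compl_iff, Set.mem_setOf_eq, not_le]
        exact hgt
      have h1 := hσ _ hmem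
      rw [add_sub_cancel_left, real_inner_smul_right, norm_smul] at h1
      have h2 : (‖t‖ * ‖w‖) ^ 2 = t ^ 2 * ‖w‖ ^ 2 := by
        rw [mul_pow]; congr 1; rw [Real.norm_eq_abs, sq_abs]
      rw [h2] at h1
      nlinarith [h1, ht0]
    have htt : Tendsto (fun t : ℝ => σ * t * ‖w‖ ^ 2) (𝓝[>] (0:ℝ)) (𝓝 0) := by
      have hc : Continuous fun t : ℝ => σ * t * ‖w‖ ^ 2 :=
        (continuous_const.mul continuous_id).mul continuous_const
      simpa using (hc.tendsto 0).mono_left nhdsWithin_le_nhds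
    exact ge_of_tendsto htt hev
  have key0 : ∀ w : En n, 0 ≤ (inner ℝ u w : ℝ) → (inner ℝ ξ w : ℝ) ≤ 0 := by
    intro w hw
    have hupos' : 0 < (inner ℝ u u : ℝ) := by
      rw [real_inner_self_eq_norm_sq]; exact pow_pos (norm_pos_iff.mpr hu) 2
    have hcu : (inner ℝ ξ u : ℝ) ≤ 0 := key u hupos'
    have hb : ∀ ε : ℝ, 0 < ε → (inner ℝ ξ w : ℝ) ≤ ε * (-(inner ℝ ξ u : ℝ)) := by
      intro ε hε
      have h1 : 0 < (inner ℝ u (w + ε • u) : ℝ) := by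
        rw [inner_add_right, real_inner_smul_right]
        nlinarith [hupos']
      have h2 := key _ h1
      rw [inner_add_right, real_inner_smul_right] at h2
      linarith
    refine le_of_forall_pos_le_add ?_
    intro ε hε
    have hc0 : 0 ≤ -(inner ℝ ξ u : ℝ) := by linarith
    have := hb (ε / (-(inner ℝ ξ u : ℝ) + 1)) (by positivity)
    have h3 : ε / (-(inner ℝ ξ u : ℝ) + 1) * (-(inner ℝ ξ u : ℝ)) ≤ ε := by
      rw [div_mul_eq_mul_div, div_le_iff₀ (by linarith)]
      nlinarith
    linarith
  set c : ℝ := (inner ℝ ξ u : ℝ) / ‖u‖ ^ 2 with hc_def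
  have hnu : (0:ℝ) < ‖u‖ ^ 2 := pow_pos (norm_pos_iff.mpr hu) 2
  have hupos : 0 < (inner ℝ u u : ℝ) := by rw [real_inner_self_eq_norm_sq]; exact hnu
  have hw0 : ξ = c • u := by
    set w₀ : En n := ξ - c • u with hw₀_def
    have huw₀ : (inner ℝ u w₀ : ℝ) = 0 := by
      rw [hw₀_def, inner_sub_right, real_inner_smul_right, hc_def,
        real_inner_self_eq_norm_sq, real_inner_comm]
      field_simp
      ring
    have h1 : (inner ℝ ξ w₀ : ℝ) ≤ 0 := key0 w₀ (le_of_eq huw₀.symm)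
    have h2 : (inner ℝ ξ (-w₀) : ℝ) ≤ 0 := key0 (-w₀) (by rw [inner_neg_right, huw₀]; simp)
    rw [inner_neg_right] at h2
    have h3 : (inner ℝ ξ w₀ : ℝ) = 0 := le_antisymm h1 (by linarith)
    have hξw : ξ = w₀ + c • u := by rw [hw₀_def]; abel
    have h4 : (inner ℝ w₀ w₀ : ℝ) = 0 := by
      have := h3
      rw [hξw, inner_add_left, real_inner_smul_left, huw₀] at this
      linarith [this]
    have h6 : w₀ = 0 := inner_self_eq_zero.mp h4
    have h7 : ξ - c • u = 0 := h6
    linear_combination (norm := module) h7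
  have hcneg : c < 0 := by
    rcases lt_trichotomy c 0 with h | h | h
    · exact h
    · exfalso; apply hξ; rw [hw0, h, zero_smul]
    · exfalso
      have hcu : (inner ℝ ξ u : ℝ) ≤ 0 := key u hupos
      rw [hc_def] at h
      rcases div_pos_iff.mp h with ⟨h1, _⟩ | ⟨_, h2⟩
      · linarith
      · linarith
  set t : ℝ := -c with ht_def
  have ht : 0 < t := by simp [ht_def]; linarith
  have hξt : ξ = t • (-u) := by rw [hw0, ht_def]; module
  -- Step B
  have hHmu : Ham F xb (-u) = 0 := by
    have := Ham_smul (F := F) (x := xb) (le_of_lt ht) (-u)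
    rw [← hξt, hH0] at this
    have := this.symm
    rcases mul_eq_zero.mp this with h | h
    · exact absurd h (ne_of_gt ht)
    · exact h
  -- Step C: local minimum on the level set
  have hgC1 : ContDiff ℝ 1 (fun x => ∇ g x) := by
    have h1 : ContDiff ℝ 1 (fderiv ℝ g) := hg2.fderiv_right (by norm_num)
    have h2 : ContDiff ℝ 1 (fun x => (InnerProductSpace.toDual ℝ (En n)).symm (fderiv ℝ g x)) :=
      ((InnerProductSpace.toDual ℝ (En n)).symm.toContinuousLinearEquiv.contDiff).comp h1
    exact h2
  have hnev : ∀ᶠ x in 𝓝 xb, ∇ g x ≠ 0 :=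
    (hgC1.continuous.continuousAt).eventually_ne hu
  have hfr : ∀ᶠ x in 𝓝 xb, g x = 0 → x ∈ frontier S := by
    filter_upwards [hnev] with x hne hgx
    rw [frontier_eq_closure_inter_closure]
    constructor
    · apply subset_closure
      rw [hgS]; exact le_of_eq hgx
    · have hgrx : HasFDerivAt g (InnerProductSpace.toDual ℝ (En n) (∇ g x)) x :=
        hasGradientAt_iff_hasFDerivAt.mp (hgdiff x).hasGradientAt
      have hwp : 0 < (InnerProductSpace.toDual ℝ (En n) (∇ g x)) (∇ g x) := by
        rw [InnerProductSpace.toDual_apply_apply, real_inner_self_eq_norm_sq]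
        exact pow_pos (norm_pos_iff.mpr hne) 2
      have hray := eventually_pos_ray hgrx hgx hwp
      apply mem_closure_ray (w := ∇ g x)
      filter_upwards [hray] with t hgt
      rw [hgS]
      simp only [Set.mem_compl_iff, Set.mem_setOf_eq, not_le]
      exact hgt
  have hψmin : IsLocalMinOn (fun x => Ham F x (-(∇ g x))) {x | g x = g xb} xb := by
    have hev : ∀ᶠ x in 𝓝 xb, x ∈ {x : En n | g x = g xb} →
        Ham F xb (-(∇ g xb)) ≤ Ham F x (-(∇ g x)) := by
      filter_upwards [hfr] with x hx hgx
      have hgx' : g x = g xb := hgx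
      have hgx0 : g x = 0 := by rw [hgx', hg0]
      have hxfr := hx hgx0
      have hnn := Ham_nonneg (hF.2.1 x).2.2 (h0F x hxfr) (-(∇ g x))
      have heq : Ham F xb (-(∇ g xb)) = 0 := hHmu
      rw [heq]; exact hnn
    have h1 := eventually_nhdsWithin_of_eventually_nhds (s := {x : En n | g x = g xb}) hev
    have h2 : ∀ᶠ x in 𝓝[{x : En n | g x = g xb}] xb,
        Ham F xb (-(∇ g xb)) ≤ Ham F x (-(∇ g x)) := by
      filter_upwards [h1, self_mem_nhdsWithin] with x h hmem
      exact h hmem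
    exact h2
  -- Step D: strict differentiability of the Hamiltonian
  set p₀ : En n := -u with hp₀_def
  have hp₀ : p₀ ≠ 0 := neg_ne_zero.mpr hu
  set r : ℝ := ‖p₀‖ / 2 with hr_def
  have hr : 0 < r := by
    have := norm_pos_iff.mpr hp₀
    rw [hr_def]; linarith
  set Kc : Set (En n × En n) := closedBall xb r ×ˢ closedBall p₀ r with hKc_def
  have hKcomp : IsCompact Kc := (isCompact_closedBall _ _).prod (isCompact_closedBall _ _)
  have hKne : ∀ q ∈ Kc, q.2 ≠ 0 := by
    rintro ⟨qx, qp⟩ hq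
    have h2 : qp ∈ closedBall p₀ r := hq.2
    rw [mem_closedBall, dist_eq_norm] at h2
    intro h0
    have h0' : qp = 0 := h0
    rw [h0'] at h2
    simp only [zero_sub, norm_neg] at h2
    rw [hr_def] at h2
    have := norm_pos_iff.mpr hp₀
    linarith
  obtain ⟨L, hL⟩ := hC11 Kc hKcomp hKne
  set L' : ℝ := max L 0 with hL'_def
  have hL'0 : 0 ≤ L' := le_max_right _ _
  have hL' : ∀ a ∈ Kc, ∀ b ∈ Kc,
      ‖gradx a.1 a.2 - gradx b.1 b.2‖ + ‖gradp a.1 a.2 - gradp b.1 b.2‖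
        ≤ L' * (‖a.1 - b.1‖ + ‖a.2 - b.2‖) := by
    intro a ha b hb
    refine (hL a ha b hb).trans ?_
    apply mul_le_mul_of_nonneg_right (le_max_left _ _)
    positivity
  have hxbK : (xb, p₀) ∈ Kc := ⟨mem_closedBall_self (le_of_lt hr), mem_closedBall_self (le_of_lt hr)⟩
  set D₀ : (En n × En n) →L[ℝ] ℝ :=
    ((InnerProductSpace.toDual ℝ (En n)) (gradx xb p₀)).comp
        (ContinuousLinearMap.fst ℝ (En n) (En n)) +
      ((InnerProductSpace.toDual ℝ (En n)) (gradp xb p₀)).comp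
        (ContinuousLinearMap.snd ℝ (En n) (En n)) with hD₀_def
  have hstrictH : HasStrictFDerivAt (fun q : En n × En n => Ham F q.1 q.2) D₀ (xb, p₀) := by
    apply HasStrictFDerivAt.of_isLittleO
    rw [Asymptotics.isLittleO_iff]
    intro ε hε
    set δ : ℝ := min r (ε / (4 * L' + 1)) with hδ_def
    have hδpos : 0 < δ := lt_min hr (by positivity)
    have hδr : δ ≤ r := min_le_left _ _
    have hδε : 4 * L' * δ ≤ ε := by
      have h1 : δ ≤ ε / (4 * L' + 1) := min_le_right _ _
      have h2 : 0 < 4 * L' + 1 := by linarith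
      rw [le_div_iff₀ h2] at h1
      nlinarith
    have hU : (ball xb δ ×ˢ ball p₀ δ) ∈ 𝓝 (xb, p₀) :=
      prod_mem_nhds (ball_mem_nhds _ hδpos) (ball_mem_nhds _ hδpos)
    filter_upwards [prod_mem_nhds hU hU] with q hq
    obtain ⟨⟨y₁, y₂⟩, ⟨z₁, z₂⟩⟩ := q
    obtain ⟨⟨hy₁, hy₂⟩, ⟨hz₁, hz₂⟩⟩ : ((y₁ ∈ ball xb δ ∧ y₂ ∈ ball p₀ δ) ∧
        (z₁ ∈ ball xb δ ∧ z₂ ∈ ball p₀ δ)) := ⟨⟨hq.1.1, hq.1.2⟩, ⟨hq.2.1, hq.2.2⟩⟩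
    -- memberships in Kc
    have hball : ∀ x : En n, x ∈ ball xb δ → x ∈ closedBall xb r :=
      fun x hx => (ball_subset_closedBall.trans (closedBall_subset_closedBall hδr)) hx
    have hballp : ∀ p : En n, p ∈ ball p₀ δ → p ∈ closedBall p₀ r :=
      fun p hp => (ball_subset_closedBall.trans (closedBall_subset_closedBall hδr)) hp
    have hy₂ne : y₂ ≠ 0 := hKne (xb, y₂) ⟨mem_closedBall_self (le_of_lt hr), hballp _ hy₂⟩
    have hz₂ne : z₂ ≠ 0 := hKne (xb, z₂) ⟨mem_closedBall_self (le_of_lt hr), hballp _ hz₂⟩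
    -- first estimate: x-variable
    have hE1 : ‖Ham F y₁ y₂ - Ham F z₁ y₂
        - (inner ℝ (gradx xb p₀) (y₁ - z₁) : ℝ)‖ ≤ 2 * L' * δ * ‖y₁ - z₁‖ := by
      have hconv : Convex ℝ (ball xb δ) := convex_ball _ _
      have hdiff : ∀ x ∈ ball xb δ, HasFDerivWithinAt (fun x' => Ham F x' y₂)
          ((InnerProductSpace.toDual ℝ (En n)) (gradx x y₂)) (ball xb δ) x := by
        intro x _
        exact (hasGradientAt_iff_hasFDerivAt.mp (hgradx x y₂ hy₂ne)).hasFDerivWithinAt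
      have hbound : ∀ x ∈ ball xb δ,
          ‖(InnerProductSpace.toDual ℝ (En n)) (gradx x y₂)
            - (InnerProductSpace.toDual ℝ (En n)) (gradx xb p₀)‖ ≤ 2 * L' * δ := by
        intro x hx
        rw [toDual_norm_sub]
        have hmem1 : (x, y₂) ∈ Kc := ⟨hball _ hx, hballp _ hy₂⟩
        have h1 := hL' (x, y₂) hmem1 (xb, p₀) hxbK
        have h2 : ‖gradx x y₂ - gradx xb p₀‖ ≤ L' * (‖x - xb‖ + ‖y₂ - p₀‖) :=
          le_trans (le_add_of_nonneg_right (norm_nonneg _)) h1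
        refine h2.trans ?_
        have hx' : ‖x - xb‖ ≤ δ := by
          rw [mem_ball, dist_eq_norm] at hx; linarith
        have hy' : ‖y₂ - p₀‖ ≤ δ := by
          rw [mem_ball, dist_eq_norm] at hy₂; linarith
        nlinarith
      have := hconv.norm_image_sub_le_of_norm_hasFDerivWithin_le' hdiff hbound hz₁ hy₁
      simpa [InnerProductSpace.toDual_apply_apply] using this
    -- second estimate: p-variable
    have hE2 : ‖Ham F z₁ y₂ - Ham F z₁ z₂
        - (inner ℝ (gradp xb p₀) (y₂ - z₂) : ℝ)‖ ≤ 2 * L' * δ * ‖y₂ - z₂‖ := by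
      have hconv : Convex ℝ (ball p₀ δ) := convex_ball _ _
      have hdiff : ∀ p ∈ ball p₀ δ, HasFDerivWithinAt (fun q => Ham F z₁ q)
          ((InnerProductSpace.toDual ℝ (En n)) (gradp z₁ p)) (ball p₀ δ) p := by
        intro p hp
        have hpne : p ≠ 0 := hKne (z₁, p) ⟨hball _ hz₁, hballp _ hp⟩
        exact (hasGradientAt_iff_hasFDerivAt.mp (hgradp z₁ p hpne)).hasFDerivWithinAt
      have hbound : ∀ p ∈ ball p₀ δ,
          ‖(InnerProductSpace.toDual ℝ (En n)) (gradp z₁ p)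
            - (InnerProductSpace.toDual ℝ (En n)) (gradp xb p₀)‖ ≤ 2 * L' * δ := by
        intro p hp
        rw [toDual_norm_sub]
        have hmem1 : (z₁, p) ∈ Kc := ⟨hball _ hz₁, hballp _ hp⟩
        have h1 := hL' (z₁, p) hmem1 (xb, p₀) hxbK
        have h2 : ‖gradp z₁ p - gradp xb p₀‖ ≤ L' * (‖z₁ - xb‖ + ‖p - p₀‖) :=
          le_trans (le_add_of_nonneg_left (norm_nonneg _)) h1
        refine h2.trans ?_
        have hx' : ‖z₁ - xb‖ ≤ δ := by
          rw [mem_ball, dist_eq_norm] at hz₁; linarith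
        have hy' : ‖p - p₀‖ ≤ δ := by
          rw [mem_ball, dist_eq_norm] at hp; linarith
        nlinarith
      have := hconv.norm_image_sub_le_of_norm_hasFDerivWithin_le' hdiff hbound hz₂ hy₂
      simpa [InnerProductSpace.toDual_apply_apply] using this
    -- assemble
    have hD₀app : D₀ ((y₁, y₂) - (z₁, z₂)) = (inner ℝ (gradx xb p₀) (y₁ - z₁) : ℝ)
        + (inner ℝ (gradp xb p₀) (y₂ - z₂) : ℝ) := by
      simp [hD₀_def, Prod.sub_def, InnerProductSpace.toDual_apply_apply]
    have hsplit : Ham F y₁ y₂ - Ham F z₁ z₂ - D₀ ((y₁, y₂) - (z₁, z₂))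
        = (Ham F y₁ y₂ - Ham F z₁ y₂ - (inner ℝ (gradx xb p₀) (y₁ - z₁) : ℝ))
          + (Ham F z₁ y₂ - Ham F z₁ z₂ - (inner ℝ (gradp xb p₀) (y₂ - z₂) : ℝ)) := by
      rw [hD₀app]; ring
    have hn1 : ‖y₁ - z₁‖ ≤ ‖(y₁, y₂) - (z₁, z₂)‖ := by
      have := norm_fst_le ((y₁, y₂) - (z₁, z₂))
      simpa [Prod.sub_def] using this
    have hn2 : ‖y₂ - z₂‖ ≤ ‖(y₁, y₂) - (z₁, z₂)‖ := by
      have := norm_snd_le ((y₁, y₂) - (z₁, z₂))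
      simpa [Prod.sub_def] using this
    calc ‖Ham F y₁ y₂ - Ham F z₁ z₂ - D₀ ((y₁, y₂) - (z₁, z₂))‖
        ≤ 2 * L' * δ * ‖y₁ - z₁‖ + 2 * L' * δ * ‖y₂ - z₂‖ := by
          rw [hsplit]; exact (norm_add_le _ _).trans (add_le_add hE1 hE2)
      _ ≤ ε * ‖(y₁, y₂) - (z₁, z₂)‖ := by
          nlinarith [mul_le_mul_of_nonneg_left hn1 (by positivity : (0:ℝ) ≤ 2 * L' * δ),
            mul_le_mul_of_nonneg_left hn2 (by positivity : (0:ℝ) ≤ 2 * L' * δ),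
            mul_le_mul_of_nonneg_right hδε (norm_nonneg ((y₁, y₂) - (z₁, z₂)))]
  -- Step E: chain rule and Lagrange multipliers
  set B : En n →L[ℝ] En n := fderiv ℝ (fun y => ∇ g y) xb with hB_def
  have hgstrict' : HasStrictFDerivAt (fun y => ∇ g y) B xb :=
    hgC1.contDiffAt.hasStrictFDerivAt one_ne_zero
  -- symmetry of the Hessian
  have hsymm : ∀ v w : En n, (inner ℝ (B v) w : ℝ) = (inner ℝ (B w) v : ℝ) := by
    set W : En n →L[ℝ] En n →L[ℝ] ℝ := fderiv ℝ (fderiv ℝ g) xb with hW_def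
    have hWsymm : ∀ v w : En n, W v w = W w v := hg2.contDiffAt.isSymmSndFDerivAt (by simp)
    have hgath : (fun y => ∇ g y)
        = (⇑(InnerProductSpace.toDual ℝ (En n)).symm) ∘ (fderiv ℝ g) := by
      funext y
      unfold gradient
      rfl
    have hBW : ∀ v : En n, B v = (InnerProductSpace.toDual ℝ (En n)).symm (W v) := by
      intro v
      have h1 : B = fderiv ℝ ((⇑(InnerProductSpace.toDual ℝ (En n)).symm) ∘ (fderiv ℝ g)) xb := by
        rw [hB_def, hgath]
      rw [h1, LinearIsometryEquiv.comp_fderiv]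
      simp [hW_def]
    intro v w
    rw [hBW v, hBW w, InnerProductSpace.toDual_symm_apply, InnerProductSpace.toDual_symm_apply]
    exact hWsymm v w
  -- strict derivative of ψ
  have hφstrict : HasStrictFDerivAt (fun x : En n => (x, -(∇ g x)))
      ((ContinuousLinearMap.id ℝ (En n)).prod (-B)) xb :=
    (hasStrictFDerivAt_id xb).prodMk hgstrict'.neg
  have hcompψ : HasStrictFDerivAt (fun x : En n => Ham F x (-(∇ g x)))
      (D₀.comp ((ContinuousLinearMap.id ℝ (En n)).prod (-B))) xb := by
    have h1 : HasStrictFDerivAt (fun q : En n × En n => Ham F q.1 q.2) D₀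
        ((fun x : En n => (x, -(∇ g x))) xb) := by
      have : (fun x : En n => (x, -(∇ g x))) xb = (xb, p₀) := by
        simp [hp₀_def, hu_def]
      rw [this]
      exact hstrictH
    exact h1.comp xb hφstrict
  set V : En n := gradx xb p₀ - B (gradp xb p₀) with hV_def
  have hDeq : D₀.comp ((ContinuousLinearMap.id ℝ (En n)).prod (-B))
      = InnerProductSpace.toDual ℝ (En n) V := by
    ext h
    simp only [ContinuousLinearMap.comp_apply, ContinuousLinearMap.prod_apply,
      ContinuousLinearMap.coe_id', id_eq, ContinuousLinearMap.neg_apply, hD₀_def,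
      ContinuousLinearMap.add_apply, ContinuousLinearMap.coe_fst',
      ContinuousLinearMap.coe_snd', InnerProductSpace.toDual_apply_apply, hV_def]
    rw [inner_sub_left]
    have h1 : (inner ℝ (gradp xb p₀) (-(B h)) : ℝ) = -(inner ℝ (B h) (gradp xb p₀) : ℝ) := by
      rw [inner_neg_right, real_inner_comm]
    have h2 : (inner ℝ (B h) (gradp xb p₀) : ℝ) = (inner ℝ (B (gradp xb p₀)) h : ℝ) :=
      hsymm h (gradp xb p₀)
    linarith [h1, h2]
  have hψstrict : HasStrictFDerivAt (fun x : En n => Ham F x (-(∇ g x)))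
      (InnerProductSpace.toDual ℝ (En n) V) xb := hDeq ▸ hcompψ
  have hgstrictg : HasStrictFDerivAt g (InnerProductSpace.toDual ℝ (En n) u) xb := by
    have h1 : HasStrictFDerivAt g (fderiv ℝ g xb) xb :=
      hg2.contDiffAt.hasStrictFDerivAt (by norm_num)
    rwa [hgradg.fderiv] at h1
  have hextr : IsLocalExtrOn (fun x : En n => Ham F x (-(∇ g x))) {x : En n | g x = g xb} xb :=
    Or.inl hψmin
  obtain ⟨a, b, hab, heq⟩ :=
    hextr.exists_multipliers_of_hasStrictFDerivAt_1d hgstrictg hψstrict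
  have heq' : a • u + b • V = 0 := by
    have happ : ∀ h : En n, a * (inner ℝ u h : ℝ) + b * (inner ℝ V h : ℝ) = 0 := by
      intro h
      have h0 := ContinuousLinearMap.ext_iff.mp heq h
      simpa [InnerProductSpace.toDual_apply_apply] using h0
    have h2 : (inner ℝ (a • u + b • V) (a • u + b • V) : ℝ) = 0 := by
      have h3 := happ (a • u + b • V)
      rw [inner_add_left, real_inner_smul_left, real_inner_smul_left]
      linarith
    exact inner_self_eq_zero.mp h2
  by_cases hb : b = 0
  · have ha : a ≠ 0 := by
      intro ha0
      apply hab
      simp [ha0, hb, Prod.ext_iff]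
    rw [hb, zero_smul, add_zero] at heq'
    exact hu (by
      have := smul_eq_zero.mp heq'
      rcases this with h | h
      · exact absurd h ha
      · exact h)
  · apply hd xb hxbn (-(a / b))
    have hVeq : V = (-(a / b)) • u := by
      have h1 : b • V = -(a • u) := by
        linear_combination (norm := module) heq'
      have h2 : V = b⁻¹ • (-(a • u)) := by
        rw [← h1, smul_smul, inv_mul_cancel₀ hb, one_smul]
      rw [h2, smul_neg, smul_smul]
      rw [neg_smul]
      congr 1
      rw [div_eq_inv_mul]
    rw [← hu_def, ← hp₀_def, ← hB_def, ← hV_def]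
    exact hVeq
end
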